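/- arXiv:1111.7253 — 9 statements merged into one kernel-verified Lean document; each statement's English description precedes it below -/
import Mathlib

section
/- Let x_1, …, x_m be pairwise distinct points of the Euclidean space ℝⁿ such that for all pairwise distinct indices i, j, k the angle ∠ x_i x_j x_k (at vertex x_j) is at most π/2. Then m ≤ 2ⁿ. -/
open EuclideanGeometry MeasureTheory Module RealInnerProductSpace ENNReal

private lemma inner_nonneg_of_angles (n m : ℕ) (x : Fin m → EuclideanSpace ℝ (Fin n))
    (hang : ∀ i j k : Fin m, i ≠ j → j ≠ k → i ≠ k →
      EuclideanGeometry.angle (x i) (x j) (x k) ≤ Real.pi / 2)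
    (i j k : Fin m) : 0 ≤ ⟪x j - x i, x k - x i⟫ := by
  rcases eq_or_ne j i with rfl | hji
  · simp
  rcases eq_or_ne k i with rfl | hki
  · simp
  rcases eq_or_ne j k with rfl | hjk
  · exact real_inner_self_nonneg
  have h := hang j i k hji hki.symm hjk
  rw [EuclideanGeometry.angle] at h
  have hv : (x j -ᵥ x i : EuclideanSpace ℝ (Fin n)) = x j - x i := rfl
  have hw : (x k -ᵥ x i : EuclideanSpace ℝ (Fin n)) = x k - x i := rfl
  rw [hv, hw] at h
  have hcos : 0 ≤ Real.cos (InnerProductGeometry.angle (x j - x i) (x k - x i)) := by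
    apply Real.cos_nonneg_of_mem_Icc
    constructor
    · linarith [InnerProductGeometry.angle_nonneg (x j - x i) (x k - x i), Real.pi_pos]
    · exact h
  have := InnerProductGeometry.cos_angle_mul_norm_mul_norm (x j - x i) (x k - x i)
  rw [← this]
  positivity

private lemma erdos_aux (n m : ℕ) (x : Fin m → EuclideanSpace ℝ (Fin n))
    (hinj : Function.Injective x)
    (hang : ∀ i j k : Fin m, i ≠ j → j ≠ k → i ≠ k →
      EuclideanGeometry.angle (x i) (x j) (x k) ≤ Real.pi / 2)
    (hspan : affineSpan ℝ (Set.range x) = ⊤) : m ≤ 2 ^ n := by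
  classical
  have hinner : ∀ i j k : Fin m, 0 ≤ ⟪x j - x i, x k - x i⟫ :=
    inner_nonneg_of_angles n m x hang
  set K := convexHull ℝ (Set.range x) with hKdef
  have hKconv : Convex ℝ K := convex_convexHull ℝ _
  have hKcpt : IsCompact K := (Set.finite_range x).isCompact_convexHull ℝ
  have hint : (interior K).Nonempty := by
    rw [hKconv.interior_nonempty_iff_affineSpan_eq_top, hKdef, affineSpan_convexHull]
    exact hspan
  have hK0 : volume K ≠ 0 := (Measure.measure_pos_of_nonempty_interior volume hint).ne'
  have hKt : volume K ≠ ⊤ := hKcpt.measure_lt_top.ne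
  -- K lies in the halfspace at x i facing x j
  have hK : ∀ i j : Fin m, ∀ p ∈ K, 0 ≤ ⟪p - x i, x j - x i⟫ := by
    intro i j
    have hset : {p : EuclideanSpace ℝ (Fin n) | 0 ≤ ⟪p - x i, x j - x i⟫}
        = {p : EuclideanSpace ℝ (Fin n) | ⟪x i, x j - x i⟫ ≤ ⟪p, x j - x i⟫} := by
      ext p
      simp [inner_sub_left, sub_nonneg]
    have hconv : Convex ℝ {p : EuclideanSpace ℝ (Fin n) | 0 ≤ ⟪p - x i, x j - x i⟫} := by
      rw [hset]
      have hlin : IsLinearMap ℝ (fun p : EuclideanSpace ℝ (Fin n) => ⟪p, x j - x i⟫) :=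
        ⟨fun a b => inner_add_left _ _ _, fun c a => real_inner_smul_left a _ c⟩
      exact convex_halfSpace_ge hlin _
    intro p hp
    refine convexHull_min ?_ hconv hp
    rintro _ ⟨k, rfl⟩
    exact hinner i k j
  set T : Fin m → Set (EuclideanSpace ℝ (Fin n)) :=
    fun i => AffineMap.homothety (x i) (2⁻¹ : ℝ) '' K with hTdef
  have hhom : ∀ (a p : EuclideanSpace ℝ (Fin n)),
      AffineMap.homothety a (2⁻¹ : ℝ) p = (2⁻¹ : ℝ) • p + (2⁻¹ : ℝ) • a := by
    intro a p
    simp only [AffineMap.homothety_apply, vsub_eq_sub, vadd_eq_add, smul_sub]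
    module
  have hTK : ∀ i, T i ⊆ K := by
    rintro i _ ⟨p, hp, rfl⟩
    rw [hhom]
    exact hKconv hp (subset_convexHull ℝ _ (Set.mem_range_self i))
      (by norm_num) (by norm_num) (by norm_num)
  have hTm : ∀ i, volume (T i) = ENNReal.ofReal (2⁻¹ ^ n) * volume K := by
    intro i
    rw [hTdef]
    simp only [Measure.addHaar_image_homothety, finrank_euclideanSpace_fin]
    congr 2
    rw [abs_of_pos (by positivity)]
  have hsep : ∀ i j : Fin m, i ≠ j → volume (T i ∩ T j) = 0 := by
    intro i j hij
    set v := x j - x i with hv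
    have hvne : v ≠ 0 := sub_ne_zero.2 fun h => hij (hinj h).symm
    have hvv : ⟪v, v⟫ ≠ 0 := inner_self_ne_zero.2 hvne
    set t : ℝ := (⟪x i, v⟫ + ⟪x j, v⟫) / 2 with ht
    have hval : ∀ (a p : EuclideanSpace ℝ (Fin n)),
        ⟪AffineMap.homothety a (2⁻¹ : ℝ) p, v⟫ = (⟪p, v⟫ + ⟪a, v⟫) / 2 := by
      intro a p
      rw [hhom, inner_add_left, real_inner_smul_left, real_inner_smul_left]
      ring
    have hsub : T i ∩ T j ⊆ {p : EuclideanSpace ℝ (Fin n) | ⟪p, v⟫ = t} := by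
      rintro w ⟨⟨p, hp, rfl⟩, ⟨q, hq, hwq⟩⟩
      have h1 : ⟪p, v⟫ ≤ ⟪x j, v⟫ := by
        have h := hK j i p hp
        have h' : x i - x j = -v := by rw [hv]; abel
        rw [h'] at h
        simpa [inner_sub_left, inner_neg_right, neg_sub, sub_nonneg] using h
      have h2 : ⟪x i, v⟫ ≤ ⟪q, v⟫ := by
        have h := hK i j q hq
        rw [← hv] at h
        simpa [inner_sub_left, sub_nonneg] using h
      have e1 : ⟪AffineMap.homothety (x i) (2⁻¹ : ℝ) p, v⟫ ≤ t := by
        rw [hval, ht]; linarith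
      have e2 : t ≤ ⟪AffineMap.homothety (x i) (2⁻¹ : ℝ) p, v⟫ := by
        rw [← hwq, hval, ht]; linarith
      exact le_antisymm e1 e2
    set W : Submodule ℝ (EuclideanSpace ℝ (Fin n)) :=
      LinearMap.ker ((innerSL ℝ v).toLinearMap) with hW
    set p₀ : EuclideanSpace ℝ (Fin n) := (t / ⟪v, v⟫) • v with hp₀
    set A : AffineSubspace ℝ (EuclideanSpace ℝ (Fin n)) := AffineSubspace.mk' p₀ W with hA
    have hAset : {p : EuclideanSpace ℝ (Fin n) | ⟪p, v⟫ = t} ⊆ (A : Set _) := by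
      intro p hp
      rw [hA, SetLike.mem_coe, AffineSubspace.mem_mk']
      rw [hW, LinearMap.mem_ker]
      have hpv : ⟪p, v⟫ = t := hp
      have hp₀v : ⟪p₀, v⟫ = t := by
        rw [hp₀, real_inner_smul_left, div_mul_cancel₀ _ hvv]
      have h0 : ⟪p - p₀, v⟫ = 0 := by
        rw [inner_sub_left, hpv, hp₀v, sub_self]
      have : ⟪v, p -ᵥ p₀⟫ = 0 := by
        rw [vsub_eq_sub, real_inner_comm]
        exact h0
      simpa using this
    have hAne : A ≠ ⊤ := by
      intro htop
      have hd : A.direction = W := by rw [hA]; exact AffineSubspace.direction_mk' p₀ W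
      rw [htop, AffineSubspace.direction_top] at hd
      have : v ∈ W := by rw [← hd]; trivial
      rw [hW, LinearMap.mem_ker] at this
      simp only [ContinuousLinearMap.coe_coe, innerSL_apply_apply] at this
      exact hvv this
    exact measure_mono_null (hsub.trans hAset) (Measure.addHaar_affineSubspace volume A hAne)
  have hTcpt : ∀ i, IsCompact (T i) :=
    fun i => hKcpt.image (AffineMap.homothety_continuous (x i) (2⁻¹ : ℝ))
  have hmeas : ∀ i, NullMeasurableSet (T i) volume :=
    fun i => ((hTcpt i).isClosed.measurableSet).nullMeasurableSet
  have hdisj : Pairwise (Function.onFun (AEDisjoint volume) T) :=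
    fun i j hij => hsep i j hij
  have hle : ∑' i, volume (T i) ≤ volume K := by
    rw [← measure_iUnion₀ hdisj hmeas]
    exact measure_mono (Set.iUnion_subset hTK)
  rw [tsum_fintype] at hle
  simp only [hTm, Finset.sum_const, Finset.card_univ, Fintype.card_fin, nsmul_eq_mul] at hle
  rw [← mul_assoc] at hle
  have hle2 : (m : ℝ≥0∞) * ENNReal.ofReal (2⁻¹ ^ n) ≤ 1 := by
    rw [← ENNReal.mul_le_mul_iff_left hK0 hKt, one_mul]
    exact hle
  have hle3 : (m : ℝ) * 2⁻¹ ^ n ≤ 1 := by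
    have : ENNReal.ofReal ((m : ℝ) * 2⁻¹ ^ n) ≤ 1 := by
      rw [ENNReal.ofReal_mul (by positivity)]
      simpa [ENNReal.ofReal_natCast] using hle2
    rw [ENNReal.ofReal_le_one] at this
    exact this
  have : (m : ℝ) ≤ 2 ^ n := by
    rw [inv_pow, ← div_eq_mul_inv, div_le_one (by positivity)] at hle3
    exact hle3
  exact_mod_cast this

theorem erdos_angle_bound (n m : ℕ) (x : Fin m → EuclideanSpace ℝ (Fin n))
    (hinj : Function.Injective x)
    (hang : ∀ i j k : Fin m, i ≠ j → j ≠ k → i ≠ k →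
      EuclideanGeometry.angle (x i) (x j) (x k) ≤ Real.pi / 2) :
    m ≤ 2 ^ n := by
  rcases Nat.eq_zero_or_pos m with rfl | hm
  · exact Nat.zero_le _
  set i₀ : Fin m := ⟨0, hm⟩ with hi₀
  set E := vectorSpan ℝ (Set.range x) with hE
  have hdn : finrank ℝ E ≤ n := by
    have := Submodule.finrank_le E
    rwa [finrank_euclideanSpace_fin] at this
  have hmem : ∀ i, x i - x i₀ ∈ E := fun i => by
    rw [hE]; exact
      vsub_mem_vectorSpan ℝ (Set.mem_range_self i) (Set.mem_range_self i₀)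
  set y : Fin m → E := fun i => ⟨x i - x i₀, hmem i⟩ with hy
  set B := stdOrthonormalBasis ℝ E with hB
  set z : Fin m → EuclideanSpace ℝ (Fin (finrank ℝ E)) := fun i => B.repr (y i) with hz
  have hyinj : Function.Injective y := by
    intro i j hij
    apply hinj
    have := congrArg (Subtype.val) hij
    simpa [hy, sub_left_injective.eq_iff] using this
  have hzinj : Function.Injective z := fun i j hij =>
    hyinj (B.repr.injective hij)
  have hydiff : ∀ i j : Fin m, ((y i - y j : E) : EuclideanSpace ℝ (Fin n)) = x i - x j := by
    intro i j
    simp [hy]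
  have hangz : ∀ i j k : Fin m, i ≠ j → j ≠ k → i ≠ k →
      EuclideanGeometry.angle (z i) (z j) (z k) ≤ Real.pi / 2 := by
    intro i j k h1 h2 h3
    have heq : EuclideanGeometry.angle (z i) (z j) (z k)
        = EuclideanGeometry.angle (x i) (x j) (x k) := by
      rw [EuclideanGeometry.angle, EuclideanGeometry.angle]
      have e1 : (z i -ᵥ z j : EuclideanSpace ℝ (Fin (finrank ℝ E))) = B.repr (y i - y j) := by
        rw [vsub_eq_sub, hz, ← map_sub]
      have e2 : (z k -ᵥ z j : EuclideanSpace ℝ (Fin (finrank ℝ E))) = B.repr (y k - y j) := by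
        rw [vsub_eq_sub, hz, ← map_sub]
      rw [e1, e2]
      have hmap : InnerProductGeometry.angle (B.repr (y i - y j)) (B.repr (y k - y j))
          = InnerProductGeometry.angle (y i - y j) (y k - y j) :=
        B.repr.toLinearIsometry.angle_map _ _
      rw [hmap, ← Submodule.angle_coe, hydiff, hydiff, vsub_eq_sub, vsub_eq_sub]
    rw [heq]
    exact hang i j k h1 h2 h3
  have hspanE : Submodule.span ℝ (Set.range y) = ⊤ := by
    have hmap : Submodule.map E.subtype (Submodule.span ℝ (Set.range y)) = E := by
      rw [Submodule.map_span]
      have himg : E.subtype '' Set.range y = Set.range (fun i => x i - x i₀) := by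
        rw [← Set.range_comp]
        rfl
      rw [himg]
      have := vectorSpan_eq_span_vsub_set_right ℝ (Set.mem_range_self (f := x) i₀)
      rw [hE, this]
      congr 1
      ext w
      simp [vsub_eq_sub]
    have := Submodule.map_subtype_top E
    apply Submodule.map_injective_of_injective E.injective_subtype
    rw [hmap, this]
  have hy0 : y i₀ = 0 := by
    rw [hy]
    simp
  have hz0 : z i₀ = 0 := by
    simp only [hz, hy0, map_zero]
  have hspanz : affineSpan ℝ (Set.range z) = ⊤ := by
    rw [AffineSubspace.affineSpan_eq_top_iff_vectorSpan_eq_top_of_nonempty ℝ _ _ ⟨z i₀, Set.mem_range_self _⟩]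
    rw [vectorSpan_eq_span_vsub_set_right ℝ (Set.mem_range_self (f := z) i₀)]
    have himg : (· -ᵥ z i₀) '' Set.range z = Set.range z := by
      rw [hz0]
      simp [vsub_eq_sub]
    rw [himg]
    have hrange : Set.range z = ⇑B.repr '' Set.range y := by
      rw [← Set.range_comp]
      rfl
    rw [hrange, show (⇑B.repr '' Set.range y) = ⇑(B.repr.toLinearEquiv : E →ₗ[ℝ] _) '' Set.range y from rfl, Submodule.span_image, hspanE, Submodule.map_top]
    rw [LinearMap.range_eq_top]
    exact B.repr.surjective
  exact le_trans (erdos_aux _ m z hzinj hangz hspanz) (Nat.pow_le_pow_right (by norm_num) hdn)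
end

section
/- Let x_1, …, x_m be pairwise distinct points of the Euclidean space ℝⁿ such that for all pairwise distinct indices i, j, k the angle ∠ x_i x_j x_k (at vertex x_j) is at most π/2. Let K be the convex hull of {x_1, …, x_m}, let x ∈ K, fix an index i, and let z = (x_i + x)/2 be the midpoint of the segment [x_i, x]. Then for every index j one has dist(z, x_i) ≤ dist(z, x_j). -/
open EuclideanGeometry

lemma inner_nonneg_of_angle_le_pi_div_two {V : Type*} [NormedAddCommGroup V]
    [InnerProductSpace ℝ V] {x y : V}
    (h : InnerProductGeometry.angle x y ≤ Real.pi / 2) :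
    0 ≤ (inner ℝ x y : ℝ) := by
  have hc : 0 ≤ Real.cos (InnerProductGeometry.angle x y) :=
    Real.cos_nonneg_of_mem_Icc ⟨by linarith [InnerProductGeometry.angle_nonneg x y,
      Real.pi_pos], h⟩
  rw [InnerProductGeometry.cos_angle] at hc
  rcases eq_or_lt_of_le (mul_nonneg (norm_nonneg x) (norm_nonneg y)) with h0 | h0
  · rcases mul_eq_zero.mp h0.symm with h' | h'
    · simp [norm_eq_zero.mp h']
    · simp [norm_eq_zero.mp h']
  · have := mul_nonneg hc h0.le
    rwa [div_mul_cancel₀ _ (ne_of_gt h0)] at this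

theorem midpoint_closest_vertex (n m : ℕ) (x : Fin m → EuclideanSpace ℝ (Fin n))
    (hinj : Function.Injective x)
    (hang : ∀ i j k : Fin m, i ≠ j → j ≠ k → i ≠ k →
      EuclideanGeometry.angle (x i) (x j) (x k) ≤ Real.pi / 2)
    (p : EuclideanSpace ℝ (Fin n)) (hp : p ∈ convexHull ℝ (Set.range x))
    (i : Fin m) :
    ∀ j : Fin m,
      dist (midpoint ℝ (x i) p) (x i) ≤ dist (midpoint ℝ (x i) p) (x j) := by
  intro j
  -- key: 0 ≤ ⟪x i - x j, p - x j⟫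
  have key : 0 ≤ (inner ℝ (x i - x j) (p - x j) : ℝ) := by
    have hS : convexHull ℝ (Set.range x) ⊆
        {y : EuclideanSpace ℝ (Fin n) | 0 ≤ (inner ℝ (x i - x j) (y - x j) : ℝ)} := by
      apply convexHull_min
      · rintro _ ⟨k, rfl⟩
        by_cases hij : i = j
        · simp [hij]
        by_cases hkj : k = j
        · simp [hkj]
        by_cases hki : k = i
        · subst hki
          simpa using real_inner_self_nonneg (x := x k - x j)
        · have := hang i j k hij (fun h => hkj h.symm) (fun h => hki h.symm)
          rw [EuclideanGeometry.angle] at this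
          exact inner_nonneg_of_angle_le_pi_div_two this
      · intro y hy z hz a b ha hb hab
        simp only [Set.mem_setOf_eq] at *
        have hb' : b = 1 - a := by linarith
        subst hb'
        have : a • y + (1 - a) • z - x j = a • (y - x j) + (1 - a) • (z - x j) := by
          module
        rw [this, inner_add_right, real_inner_smul_right, real_inner_smul_right]
        exact add_nonneg (mul_nonneg ha hy) (mul_nonneg hb hz)
    exact hS hp
  -- squared distance comparison
  set z := midpoint ℝ (x i) p with hz
  have hsq : dist z (x i) ^ 2 + (inner ℝ (x i - x j) (p - x j) : ℝ) = dist z (x j) ^ 2 := by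
    rw [dist_eq_norm, dist_eq_norm, ← real_inner_self_eq_norm_sq,
      ← real_inner_self_eq_norm_sq]
    have e1 : z - x i = (2 : ℝ)⁻¹ • (p - x i) := by
      rw [hz, midpoint_sub_left, invOf_eq_inv]
    have e2 : z - x j =
        (2 : ℝ)⁻¹ • (x i - x j) + (2 : ℝ)⁻¹ • (p - x j) := by
      rw [hz, midpoint_eq_smul_add, invOf_eq_inv]; module
    rw [e1, e2]
    simp only [inner_add_right, inner_add_left, inner_sub_left, inner_sub_right,
      real_inner_smul_left, real_inner_smul_right, real_inner_comm (x i) p,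
      real_inner_comm (x i) (x j), real_inner_comm (x j) p]
    ring
  nlinarith [dist_nonneg (x := z) (y := x i), dist_nonneg (x := z) (y := x j)]
end

section
/- Let x_1, …, x_m be pairwise distinct points of the Euclidean space ℝⁿ such that for all pairwise distinct indices i, j, k the angle ∠ x_i x_j x_k (at vertex x_j) is at most π/2. Let K be the convex hull of {x_1, …, x_m}, and for each i let h_i : ℝⁿ → ℝⁿ be the homothety h_i(z) = x_i + (z − x_i)/2 with center x_i and ratio 1/2. Then for all i ≠ j the interiors of h_i(K) and h_j(K) are disjoint. -/
open EuclideanGeometry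

/-- If the angle at vertex `b` between `a` and `c` is at most `π/2`, then
`⟪a - b, c - b⟫ ≥ 0`. -/
lemma inner_nonneg_of_angle_le_pi_div_two_s3 {n : ℕ} {a b c : EuclideanSpace ℝ (Fin n)}
    (h : EuclideanGeometry.angle a b c ≤ Real.pi / 2) :
    (0 : ℝ) ≤ inner ℝ (a - b) (c - b) := by
  have hc : Real.cos (InnerProductGeometry.angle (a -ᵥ b) (c -ᵥ b)) *
      (‖a -ᵥ b‖ * ‖c -ᵥ b‖) = inner ℝ (a -ᵥ b) (c -ᵥ b) :=
    InnerProductGeometry.cos_angle_mul_norm_mul_norm _ _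
  have hcos : 0 ≤ Real.cos (InnerProductGeometry.angle (a -ᵥ b) (c -ᵥ b)) := by
    apply Real.cos_nonneg_of_mem_Icc
    constructor
    · linarith [InnerProductGeometry.angle_nonneg (a -ᵥ b) (c -ᵥ b), Real.pi_pos]
    · exact h
  have : (0 : ℝ) ≤ inner ℝ (a -ᵥ b) (c -ᵥ b) := by
    rw [← hc]
    positivity
  simpa using this

theorem homothety_interiors_disjoint (n m : ℕ) (x : Fin m → EuclideanSpace ℝ (Fin n))
    (hinj : Function.Injective x)
    (hang : ∀ i j k : Fin m, i ≠ j → j ≠ k → i ≠ k →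
      EuclideanGeometry.angle (x i) (x j) (x k) ≤ Real.pi / 2)
    (i j : Fin m) (hij : i ≠ j) :
    Disjoint
      (interior (AffineMap.homothety (x i) (2⁻¹ : ℝ) '' convexHull ℝ (Set.range x)))
      (interior (AffineMap.homothety (x j) (2⁻¹ : ℝ) '' convexHull ℝ (Set.range x))) := by
  set d : EuclideanSpace ℝ (Fin n) := x j - x i with hd
  have hdne : d ≠ 0 := sub_ne_zero.2 fun h => hij (hinj h.symm)
  set f : EuclideanSpace ℝ (Fin n) → ℝ := fun z => inner ℝ d z with hf
  have hflin : IsLinearMap ℝ f :=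
    ⟨fun a b => inner_add_right d a b, fun r a => real_inner_smul_right d a r⟩
  -- f is bounded above by f (x j) on K
  have hub : ∀ z ∈ convexHull ℝ (Set.range x), f z ≤ f (x j) := by
    intro z hz
    have : convexHull ℝ (Set.range x) ⊆ {z | f z ≤ f (x j)} := by
      apply convexHull_min _ (convex_halfSpace_le hflin _)
      rintro _ ⟨k, rfl⟩
      have key : (0 : ℝ) ≤ inner ℝ (x i - x j) (x k - x j) := by
        rcases eq_or_ne k j with rfl | hkj
        · simp
        rcases eq_or_ne k i with rfl | hki
        · rw [real_inner_comm]; exact real_inner_self_nonneg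
        · exact inner_nonneg_of_angle_le_pi_div_two_s3 (hang i j k hij (Ne.symm hkj) (Ne.symm hki))
      have : inner ℝ d (x k) - inner ℝ d (x j) = -(inner ℝ (x i - x j) (x k - x j) : ℝ) := by
        simp only [hd, inner_sub_left, inner_sub_right]
        try ring
      simp only [Set.mem_setOf_eq, hf]
      linarith
    exact this hz
  -- f is bounded below by f (x i) on K
  have hlb : ∀ z ∈ convexHull ℝ (Set.range x), f (x i) ≤ f z := by
    intro z hz
    have : convexHull ℝ (Set.range x) ⊆ {z | f (x i) ≤ f z} := by
      apply convexHull_min _ (convex_halfSpace_ge hflin _)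
      rintro _ ⟨k, rfl⟩
      have key : (0 : ℝ) ≤ inner ℝ (x j - x i) (x k - x i) := by
        rcases eq_or_ne k i with rfl | hki
        · simp
        rcases eq_or_ne k j with rfl | hkj
        · rw [real_inner_comm]; exact real_inner_self_nonneg
        · exact inner_nonneg_of_angle_le_pi_div_two_s3
            (hang j i k (Ne.symm hij) (Ne.symm hki) (Ne.symm hkj))
      have : inner ℝ d (x k) - inner ℝ d (x i) = (inner ℝ (x j - x i) (x k - x i) : ℝ) := by
        simp only [hd, inner_sub_left, inner_sub_right]
        try ring
      simp only [Set.mem_setOf_eq, hf]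
      linarith
    exact this hz
  set c : ℝ := (f (x i) + f (x j)) / 2 with hc
  -- bounds on the homothety images
  have hbound_i : ∀ p ∈ AffineMap.homothety (x i) (2⁻¹ : ℝ) '' convexHull ℝ (Set.range x),
      f p ≤ c := by
    rintro _ ⟨z, hz, rfl⟩
    have h1 := hub z hz
    have : f (AffineMap.homothety (x i) (2⁻¹ : ℝ) z) = 2⁻¹ * f z + 2⁻¹ * f (x i) := by
      simp only [AffineMap.homothety_apply, hf]
      simp only [vsub_eq_sub, vadd_eq_add, inner_add_right, real_inner_smul_right,
        inner_sub_right]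
      ring
    rw [this, hc]
    linarith
  have hbound_j : ∀ p ∈ AffineMap.homothety (x j) (2⁻¹ : ℝ) '' convexHull ℝ (Set.range x),
      c ≤ f p := by
    rintro _ ⟨z, hz, rfl⟩
    have h1 := hlb z hz
    have : f (AffineMap.homothety (x j) (2⁻¹ : ℝ) z) = 2⁻¹ * f z + 2⁻¹ * f (x j) := by
      simp only [AffineMap.homothety_apply, hf]
      simp only [vsub_eq_sub, vadd_eq_add, inner_add_right, real_inner_smul_right,
        inner_sub_right]
      ring
    rw [this, hc]
    linarith
  -- now the disjointness
  rw [Set.disjoint_left]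
  intro a hai haj
  have hai' : f a ≤ c := hbound_i a (interior_subset hai)
  have haj' : c ≤ f a := hbound_j a (interior_subset haj)
  -- a is in the interior of the first set; move slightly in direction d
  obtain ⟨ε, hε, hball⟩ := Metric.isOpen_iff.1 isOpen_interior a hai
  set t : ℝ := ε / (2 * ‖d‖) with ht
  have hdnorm : 0 < ‖d‖ := norm_pos_iff.2 hdne
  have htpos : 0 < t := by positivity
  have hmem : a + t • d ∈ Metric.ball a ε := by
    rw [Metric.mem_ball, dist_eq_norm]
    have : a + t • d - a = t • d := by abel
    rw [this, norm_smul, Real.norm_eq_abs, abs_of_pos htpos, ht]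
    rw [div_mul_eq_mul_div, div_lt_iff₀ (by positivity)]
    nlinarith
  have hmem' : a + t • d ∈ AffineMap.homothety (x i) (2⁻¹ : ℝ) '' convexHull ℝ (Set.range x) :=
    interior_subset (hball hmem)
  have hle := hbound_i _ hmem'
  have : f (a + t • d) = f a + t * ‖d‖ ^ 2 := by
    simp only [hf, inner_add_right, real_inner_smul_right, real_inner_self_eq_norm_sq]
  rw [this] at hle
  nlinarith [mul_pos htpos (pow_pos hdnorm 2)]
end

section
/- Let Γ be a discrete cocompact subgroup of isometries of ℝⁿ such that ℰ is nonempty and Γ has the reflection property and the midpoint property. Let X, Y ∈ ℰ with X ∈ 𝔖(Y). Then for every vector v ∈ ℝⁿ such that γ^# v = v for all γ ∈ Γ_{X,Y}, one has Γ_Y^#(v) = {v, −v}. -/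
open Metric

noncomputable section

/-- The rotational (linear) part of an isometry of Euclidean space,
evaluated at a vector `v`. -/
def rotPart {n : ℕ} (γ : EuclideanSpace ℝ (Fin n) ≃ᵢ EuclideanSpace ℝ (Fin n))
    (v : EuclideanSpace ℝ (Fin n)) : EuclideanSpace ℝ (Fin n) :=
  γ v - γ 0

/-- A subgroup of isometries acts properly discontinuously. -/
def ProperlyDisc {n : ℕ}
    (Γ : Subgroup (EuclideanSpace ℝ (Fin n) ≃ᵢ EuclideanSpace ℝ (Fin n))) : Prop :=
  ∀ K : Set (EuclideanSpace ℝ (Fin n)), IsCompact K →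
    {γ : EuclideanSpace ℝ (Fin n) ≃ᵢ EuclideanSpace ℝ (Fin n) |
      γ ∈ Γ ∧ ((γ '' K) ∩ K).Nonempty}.Finite

/-- A subgroup of isometries acts cocompactly. -/
def CocompactAct {n : ℕ}
    (Γ : Subgroup (EuclideanSpace ℝ (Fin n) ≃ᵢ EuclideanSpace ℝ (Fin n))) : Prop :=
  ∃ K : Set (EuclideanSpace ℝ (Fin n)), IsCompact K ∧ ⋃ γ ∈ Γ, γ '' K = Set.univ

/-- The fixed-point set of a subgroup of isometries. -/
def FixSet {n : ℕ}
    (H : Subgroup (EuclideanSpace ℝ (Fin n) ≃ᵢ EuclideanSpace ℝ (Fin n))) :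
    Set (EuclideanSpace ℝ (Fin n)) :=
  {y | ∀ h ∈ H, h y = y}

/-- `ℰ`: the set of points which are isolated points of the fixed-point set of some
subgroup of `Γ`. -/
def SingSet {n : ℕ}
    (Γ : Subgroup (EuclideanSpace ℝ (Fin n) ≃ᵢ EuclideanSpace ℝ (Fin n))) :
    Set (EuclideanSpace ℝ (Fin n)) :=
  {x | ∃ H, H ≤ Γ ∧ x ∈ FixSet H ∧ ∃ ε > 0, FixSet H ∩ ball x ε = {x}}

/-- The Voronoi cell of `x` with respect to a set `E`. -/
def Vor {n : ℕ} (E : Set (EuclideanSpace ℝ (Fin n))) (x : EuclideanSpace ℝ (Fin n)) :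
    Set (EuclideanSpace ℝ (Fin n)) :=
  {z | ∀ y ∈ E, dist z x ≤ dist z y}

/-- `𝔖(x)`: the set of points `y ∈ ℰ`, `y ≠ x`, whose Voronoi cell meets that of `x`
in a face of dimension `n - 1`. -/
def SS {n : ℕ}
    (Γ : Subgroup (EuclideanSpace ℝ (Fin n) ≃ᵢ EuclideanSpace ℝ (Fin n)))
    (x : EuclideanSpace ℝ (Fin n)) : Set (EuclideanSpace ℝ (Fin n)) :=
  {y | y ∈ SingSet Γ ∧ y ≠ x ∧
    Module.finrank ℝ
      (affineSpan ℝ (Vor (SingSet Γ) x ∩ Vor (SingSet Γ) y)).direction = n - 1}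

/-- `Γ_x^#(v)`: the orbit of the vector `v` under the rotational parts of the
stabilizer of `x` in `Γ`. -/
def rotSet {n : ℕ}
    (Γ : Subgroup (EuclideanSpace ℝ (Fin n) ≃ᵢ EuclideanSpace ℝ (Fin n)))
    (x v : EuclideanSpace ℝ (Fin n)) : Set (EuclideanSpace ℝ (Fin n)) :=
  {w | ∃ γ ∈ Γ, γ x = x ∧ rotPart γ v = w}

/-- The reflection property. -/
def ReflProp {n : ℕ}
    (Γ : Subgroup (EuclideanSpace ℝ (Fin n) ≃ᵢ EuclideanSpace ℝ (Fin n))) : Prop :=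
  ∀ x ∈ SingSet Γ, ∀ y ∈ SS Γ x, rotSet Γ x (x - y) = {x - y, y - x}

/-- The midpoint property. -/
def MidProp {n : ℕ}
    (Γ : Subgroup (EuclideanSpace ℝ (Fin n) ≃ᵢ EuclideanSpace ℝ (Fin n))) : Prop :=
  ∀ x ∈ SingSet Γ, ∀ y ∈ SS Γ x,
    midpoint ℝ x y ∈ Vor (SingSet Γ) x ∩ Vor (SingSet Γ) y ∧
    ∀ z ∈ SingSet Γ, z ≠ x → z ≠ y → midpoint ℝ x y ∉ Vor (SingSet Γ) z


section rotPartHelpers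
variable {n : ℕ}

private lemma rotPart_eqL (γ : EuclideanSpace ℝ (Fin n) ≃ᵢ EuclideanSpace ℝ (Fin n))
    (v : EuclideanSpace ℝ (Fin n)) :
    rotPart γ v = γ.toRealLinearIsometryEquiv v := by
  rw [rotPart, IsometryEquiv.toRealLinearIsometryEquiv_apply]

private lemma rotPart_one (v : EuclideanSpace ℝ (Fin n)) :
    rotPart (1 : EuclideanSpace ℝ (Fin n) ≃ᵢ EuclideanSpace ℝ (Fin n)) v = v := by
  simp [rotPart]

private lemma rotPart_add (γ : EuclideanSpace ℝ (Fin n) ≃ᵢ EuclideanSpace ℝ (Fin n))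
    (a b : EuclideanSpace ℝ (Fin n)) :
    rotPart γ (a + b) = rotPart γ a + rotPart γ b := by
  simp only [rotPart_eqL]; exact map_add _ a b

private lemma rotPart_smul (γ : EuclideanSpace ℝ (Fin n) ≃ᵢ EuclideanSpace ℝ (Fin n))
    (t : ℝ) (a : EuclideanSpace ℝ (Fin n)) :
    rotPart γ (t • a) = t • rotPart γ a := by
  simp only [rotPart_eqL]; exact map_smul _ t a

private lemma rotPart_neg (γ : EuclideanSpace ℝ (Fin n) ≃ᵢ EuclideanSpace ℝ (Fin n))
    (a : EuclideanSpace ℝ (Fin n)) :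
    rotPart γ (-a) = - rotPart γ a := by
  simp only [rotPart_eqL]; exact map_neg _ a

private lemma rotPart_inj (γ : EuclideanSpace ℝ (Fin n) ≃ᵢ EuclideanSpace ℝ (Fin n))
    {a b : EuclideanSpace ℝ (Fin n)} (h : rotPart γ a = rotPart γ b) : a = b :=
  γ.injective (sub_left_inj.mp h)

private lemma rotPart_affine (γ : EuclideanSpace ℝ (Fin n) ≃ᵢ EuclideanSpace ℝ (Fin n))
    (p w : EuclideanSpace ℝ (Fin n)) :
    γ (p + w) = γ p + rotPart γ w := by
  have h1 : γ (p + w) - γ 0 = (γ p - γ 0) + (γ w - γ 0) := by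
    have := rotPart_add γ p w
    simpa [rotPart] using this
  have h2 := sub_eq_iff_eq_add.mp h1
  rw [rotPart, h2]; abel

private lemma rotPart_mul (σ τ : EuclideanSpace ℝ (Fin n) ≃ᵢ EuclideanSpace ℝ (Fin n))
    (v : EuclideanSpace ℝ (Fin n)) :
    rotPart (σ * τ) v = rotPart σ (rotPart τ v) := by
  have h := rotPart_affine σ (τ 0) (τ v - τ 0)
  have e : τ 0 + (τ v - τ 0) = τ v := by abel
  rw [e] at h
  rw [rotPart, IsometryEquiv.mul_apply, IsometryEquiv.mul_apply,
    show rotPart τ v = τ v - τ 0 from rfl, h]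
  abel

end rotPartHelpers

theorem sublemma_rot_orbit_pm {n : ℕ} (hn : 1 ≤ n)
    (Γ : Subgroup (EuclideanSpace ℝ (Fin n) ≃ᵢ EuclideanSpace ℝ (Fin n)))
    (hdisc : ProperlyDisc Γ) (hcc : CocompactAct Γ)
    (hne : (SingSet Γ).Nonempty) (hrefl : ReflProp Γ) (hmid : MidProp Γ)
    (X Y : EuclideanSpace ℝ (Fin n)) (hX : X ∈ SS Γ Y) (hY : Y ∈ SingSet Γ)
    (v : EuclideanSpace ℝ (Fin n))
    (hv : ∀ γ ∈ Γ, γ X = X → γ Y = Y → rotPart γ v = v) :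
    rotSet Γ Y v = {v, -v} := by
  classical
  obtain ⟨H', hle, hfix, ε, hε, hball⟩ := id hY
  -- Any vector fixed by the rotational part of every element of the stabilizer of Y is zero.
  have fixzero : ∀ u : EuclideanSpace ℝ (Fin n),
      (∀ γ ∈ Γ, γ Y = Y → rotPart γ u = u) → u = 0 := by
    intro u hu
    by_contra hu0
    have hun : (0:ℝ) < ‖u‖ := norm_pos_iff.mpr hu0
    set t : ℝ := ε / (2 * ‖u‖) with ht
    have htpos : 0 < t := div_pos hε (by positivity)
    have hmem : Y + t • u ∈ FixSet H' ∩ ball Y ε := by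
      refine ⟨fun h hh => ?_, ?_⟩
      · have hhΓ : h ∈ Γ := hle hh
        have hhY : h Y = Y := hfix h hh
        rw [rotPart_affine h Y (t • u), hhY, rotPart_smul, hu h hhΓ hhY]
      · rw [mem_ball, dist_eq_norm]
        have e1 : Y + t • u - Y = t • u := by abel
        rw [e1, norm_smul, Real.norm_eq_abs, abs_of_pos htpos, ht]
        have e2 : ε / (2 * ‖u‖) * ‖u‖ = ε / 2 := by
          field_simp
        rw [e2]; linarith
    rw [hball] at hmem
    have h0 : t • u = 0 := by
      have h1 : Y + t • u = Y := hmem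
      simpa using h1
    rcases smul_eq_zero.mp h0 with h | h
    · exact htpos.ne' h
    · exact hu0 h
  -- Reflection property at Y with neighbor X.
  have hreflY : rotSet Γ Y (Y - X) = {Y - X, X - Y} := hrefl Y hY X hX
  have hYXX : Y + (X - Y) = X := by abel
  -- Elements of the stabilizer of Y whose rotational part fixes Y - X also fix X.
  have fixX : ∀ γ ∈ Γ, γ Y = Y → rotPart γ (Y - X) = Y - X → γ X = X := by
    intro γ hγ hγY hγu
    have h := rotPart_affine γ Y (X - Y)
    rw [hYXX, hγY] at h
    have h2 : rotPart γ (X - Y) = X - Y := by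
      rw [show X - Y = -(Y - X) from by abel, rotPart_neg, hγu]
    rw [h2, hYXX] at h
    exact h
  -- Pick γ₀ in the stabilizer of Y whose rotational part reverses Y - X.
  have hmemXY : X - Y ∈ rotSet Γ Y (Y - X) := by rw [hreflY]; simp
  obtain ⟨γ₀, hγ₀Γ, hγ₀Y, hγ₀u⟩ := hmemXY
  -- Key dichotomy for the orbit of v.
  have key : ∀ γ ∈ Γ, γ Y = Y → rotPart γ v = v ∨ rotPart γ v = rotPart γ₀ v := by
    intro γ hγ hγY
    have humem : rotPart γ (Y - X) ∈ ({Y - X, X - Y} :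
        Set (EuclideanSpace ℝ (Fin n))) := by
      rw [← hreflY]; exact ⟨γ, hγ, hγY, rfl⟩
    rcases humem with hu | hu
    · exact Or.inl (hv γ hγ (fixX γ hγ hγY hu) hγY)
    · right
      have hu' : rotPart γ (Y - X) = X - Y := hu
      have hδΓ : γ₀⁻¹ * γ ∈ Γ := mul_mem (inv_mem hγ₀Γ) hγ
      have hγ₀invY : γ₀⁻¹ Y = Y := by
        conv_lhs => rw [← hγ₀Y]
        exact γ₀.inv_apply_self Y
      have hδY : (γ₀⁻¹ * γ) Y = Y := by
        rw [IsometryEquiv.mul_apply, hγY, hγ₀invY]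
      have hinvu : rotPart γ₀⁻¹ (X - Y) = Y - X := by
        have h := rotPart_mul γ₀⁻¹ γ₀ (Y - X)
        rw [inv_mul_cancel, rotPart_one, hγ₀u] at h
        exact h.symm
      have hδu : rotPart (γ₀⁻¹ * γ) (Y - X) = Y - X := by
        rw [rotPart_mul, hu', hinvu]
      have hvfix := hv (γ₀⁻¹ * γ) hδΓ (fixX _ hδΓ hδY hδu) hδY
      have h := rotPart_mul γ₀ (γ₀⁻¹ * γ) v
      rw [hvfix, ← mul_assoc, mul_inv_cancel, one_mul] at h
      exact h
  set w := rotPart γ₀ v with hwdef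
  -- The same dichotomy for w.
  have keyw : ∀ γ ∈ Γ, γ Y = Y → rotPart γ w = v ∨ rotPart γ w = w := by
    intro γ hγ hγY
    have h1 : (γ * γ₀) ∈ Γ := mul_mem hγ hγ₀Γ
    have h2 : (γ * γ₀) Y = Y := by rw [IsometryEquiv.mul_apply, hγ₀Y, hγY]
    have h3 := key _ h1 h2
    rw [rotPart_mul, ← hwdef] at h3
    exact h3
  -- v + w is fixed by the rotational part of the whole stabilizer of Y.
  have sumfix : ∀ γ ∈ Γ, γ Y = Y → rotPart γ (v + w) = v + w := by
    intro γ hγ hγY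
    rw [rotPart_add]
    rcases key γ hγ hγY with h1 | h1 <;> rcases keyw γ hγ hγY with h2 | h2
    · have hvw : v = w := rotPart_inj γ (h1.trans h2.symm)
      rw [h1, h2, hvw]
    · rw [h1, h2]
    · rw [h1, h2]; abel
    · have hvw : v = w := rotPart_inj γ (h1.trans h2.symm)
      rw [h1, h2, hvw]
  have hvw0 : v + w = 0 := fixzero (v + w) sumfix
  have hwv : w = -v := by
    have h := hvw0
    rw [add_comm] at h
    exact eq_neg_of_add_eq_zero_left h
  -- Conclusion.
  ext z
  simp only [rotSet, Set.mem_setOf_eq, Set.mem_insert_iff, Set.mem_singleton_iff]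
  constructor
  · rintro ⟨γ, hγ, hγY, rfl⟩
    rcases key γ hγ hγY with h | h
    · exact Or.inl h
    · exact Or.inr (h.trans hwv)
  · rintro (hz | hz)
    · exact ⟨1, one_mem Γ, rfl, by rw [hz]; exact rotPart_one v⟩
    · exact ⟨γ₀, hγ₀Γ, hγ₀Y, by rw [hz]; exact hwdef.symm.trans hwv⟩
end
end

section
/- Let Γ be a discrete cocompact subgroup of isometries of ℝⁿ such that ℰ is nonempty and Γ has the reflection property and the midpoint property. Let X, Y, Z ∈ ℰ with Y, Z ∈ 𝔖(X), set Z* = Y + (Z − X), and suppose Γ_{X,Y} = Γ_{X,Z}. Then: (1) every γ ∈ Γ_Y acts on the affine span A of {X, Y, Z} either as the identity or as the point reflection at Y, i.e. for every γ ∈ Γ_Y either γp = p for all p ∈ A, or γp = 2Y − p for all p ∈ A; and (2) Z* ∈ ℰ. -/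
open Metric

noncomputable section

section AuxFourthPoint

variable {n : ℕ}

local notation "ES" => EuclideanSpace ℝ (Fin n)

/-- The fundamental affine identity for isometries (Mazur–Ulam). -/
lemma rotPart_eq (γ : ES ≃ᵢ ES) (p q : ES) : γ p - γ q = rotPart γ (p - q) := by
  have h := γ.toRealLinearIsometryEquiv.map_sub p q
  simp only [IsometryEquiv.toRealLinearIsometryEquiv_apply] at h
  unfold rotPart
  rw [h]; abel

lemma rotPart_smul_s8 (γ : ES ≃ᵢ ES) (c : ℝ) (v : ES) :
    rotPart γ (c • v) = c • rotPart γ v := by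
  have h := γ.toRealLinearIsometryEquiv.map_smul c v
  simp only [IsometryEquiv.toRealLinearIsometryEquiv_apply] at h
  unfold rotPart
  exact h

lemma rotPart_neg_s8 (γ : ES ≃ᵢ ES) (v : ES) : rotPart γ (-v) = -rotPart γ v := by
  have h := rotPart_smul_s8 γ (-1 : ℝ) v
  simpa using h

lemma apply_add (γ : ES ≃ᵢ ES) (a v : ES) : γ (a + v) = γ a + rotPart γ v := by
  have h := rotPart_eq γ (a + v) a
  rw [add_sub_cancel_left] at h
  have h2 := sub_eq_iff_eq_add.mp h
  rw [h2, add_comm]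

lemma apply_add_sub (γ : ES ≃ᵢ ES) (a b c : ES) :
    γ (a + (b - c)) = γ a + (γ b - γ c) := by
  rw [apply_add, ← rotPart_eq]

lemma rotPart_mul_s8 (γ δ : ES ≃ᵢ ES) (v : ES) :
    rotPart (γ * δ) v = rotPart γ (rotPart δ v) := by
  show (γ * δ) v - (γ * δ) 0 = rotPart γ (rotPart δ v)
  rw [IsometryEquiv.mul_apply, IsometryEquiv.mul_apply, rotPart_eq γ (δ v) (δ 0)]
  rfl

/-- Dichotomy from the reflection property: any element of the stabilizer of `x`
either fixes `y` or sends it to its point reflection in `x`. -/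
lemma stab_cases {Γ : Subgroup (ES ≃ᵢ ES)} (hrefl : ReflProp Γ) {x y : ES}
    (hx : x ∈ SingSet Γ) (hy : y ∈ SS Γ x) {γ : ES ≃ᵢ ES}
    (hγ : γ ∈ Γ) (hγx : γ x = x) : γ y = y ∨ γ y = (2 : ℝ) • x - y := by
  have hset := hrefl x hx y hy
  have hmem : rotPart γ (x - y) ∈ rotSet Γ x (x - y) := ⟨γ, hγ, hγx, rfl⟩
  rw [hset] at hmem
  have heq : rotPart γ (x - y) = x - γ y := by rw [← rotPart_eq, hγx]
  rcases hmem with h | h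
  · left
    have h2 : x - γ y = x - y := by rw [← heq, h]
    exact sub_right_inj.mp h2
  · right
    have h2 : x - γ y = y - x := by rw [← heq]; exact h
    have h3 : γ y = x - (y - x) := by rw [← h2]; abel
    rw [h3]; module

/-- Existence of a "reflection" from the reflection property. -/
lemma exists_refl {Γ : Subgroup (ES ≃ᵢ ES)} (hrefl : ReflProp Γ) {x y : ES}
    (hx : x ∈ SingSet Γ) (hy : y ∈ SS Γ x) :
    ∃ τ : ES ≃ᵢ ES, τ ∈ Γ ∧ τ x = x ∧ τ y = (2 : ℝ) • x - y := by
  have hset := hrefl x hx y hy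
  have hmem : y - x ∈ rotSet Γ x (x - y) := by
    rw [hset]; exact Set.mem_insert_iff.mpr (Or.inr rfl)
  obtain ⟨τ, hτ, hτx, hrot⟩ := hmem
  refine ⟨τ, hτ, hτx, ?_⟩
  have h1 : τ x - τ y = rotPart τ (x - y) := rotPart_eq τ x y
  rw [hτx, hrot] at h1
  have h3 : τ y = x - (y - x) := by rw [← h1]; abel
  rw [h3]; module

/-- Key lemma: if `u` is fixed by the rotational part of every element fixing both
`x` and `y`, then any `τ ∈ Γ` fixing `x` and reflecting `y` through `x`
reverses `u`.  Uses the isolation of `x` in the fixed-point set of a subgroup. -/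
lemma rot_neg {Γ : Subgroup (ES ≃ᵢ ES)} (hrefl : ReflProp Γ) {x y : ES}
    (hx : x ∈ SingSet Γ) (hy : y ∈ SS Γ x)
    {H : Subgroup (ES ≃ᵢ ES)} (hle : H ≤ Γ) (hfixx : x ∈ FixSet H)
    {ε : ℝ} (hε : 0 < ε) (hball : FixSet H ∩ Metric.ball x ε = {x})
    {u : ES} (hu : ∀ γ : ES ≃ᵢ ES, γ ∈ Γ → γ x = x → γ y = y → rotPart γ u = u)
    {τ : ES ≃ᵢ ES} (hτΓ : τ ∈ Γ) (hτx : τ x = x) (hτy : τ y = (2 : ℝ) • x - y) :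
    rotPart τ u = -u := by
  have hτinvx : τ⁻¹ x = x := by nth_rewrite 1 [← hτx]; exact τ.inv_apply_self x
  have hτinvy : τ⁻¹ ((2 : ℝ) • x - y) = y := by rw [← hτy]; exact τ.inv_apply_self y
  have hcomb : ∀ δ : ES ≃ᵢ ES, δ x = x → δ y = ((2 : ℝ) • x - y) →
      δ ((2 : ℝ) • x - y) = δ x + (δ x - δ y) := by
    intro δ h1 h2
    have e1 : (2 : ℝ) • x - y = x + (x - y) := by module
    rw [e1, apply_add_sub]
  set w := u + rotPart τ u with hw
  have key : ∀ γ : ES ≃ᵢ ES, γ ∈ Γ → γ x = x → rotPart γ w = w := by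
    intro γ hγ hγx
    rcases stab_cases hrefl hx hy hγ hγx with hcase | hcase
    · -- γ fixes y as well
      have hγu : rotPart γ u = u := hu γ hγ hγx hcase
      have hδΓ : τ⁻¹ * (γ * τ) ∈ Γ := mul_mem (inv_mem hτΓ) (mul_mem hγ hτΓ)
      have hδx : (τ⁻¹ * (γ * τ)) x = x := by
        rw [IsometryEquiv.mul_apply, IsometryEquiv.mul_apply, hτx, hγx, hτinvx]
      have hδy : (τ⁻¹ * (γ * τ)) y = y := by
        rw [IsometryEquiv.mul_apply, IsometryEquiv.mul_apply, hτy]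
        have e2 : γ ((2 : ℝ) • x - y) = (2 : ℝ) • x - y := by
          have e1 : (2 : ℝ) • x - y = x + (x - y) := by module
          rw [e1, apply_add_sub, hγx, hcase]
        rw [e2, hτinvy]
      have hδu := hu _ hδΓ hδx hδy
      have hgt : γ * τ = τ * (τ⁻¹ * (γ * τ)) := by group
      have h2 : rotPart γ (rotPart τ u) = rotPart τ u := by
        rw [← rotPart_mul_s8, hgt, rotPart_mul_s8, hδu]
      have := rotPart_eq γ (u + rotPart τ u) (rotPart τ u)
      -- easier: use additivity through linear structure
      have hadd : rotPart γ (u + rotPart τ u)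
          = rotPart γ u + rotPart γ (rotPart τ u) := by
        have h := γ.toRealLinearIsometryEquiv.map_add u (rotPart τ u)
        simp only [IsometryEquiv.toRealLinearIsometryEquiv_apply] at h
        unfold rotPart
        exact h
      rw [hw, hadd, hγu, h2]
    · -- γ y = 2x - y
      have hδΓ : τ⁻¹ * γ ∈ Γ := mul_mem (inv_mem hτΓ) hγ
      have hδx : (τ⁻¹ * γ) x = x := by
        rw [IsometryEquiv.mul_apply, hγx, hτinvx]
      have hδy : (τ⁻¹ * γ) y = y := by
        rw [IsometryEquiv.mul_apply, hcase, hτinvy]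
      have hδu := hu _ hδΓ hδx hδy
      have hγu : rotPart γ u = rotPart τ u := by
        have hgt : γ = τ * (τ⁻¹ * γ) := by group
        rw [hgt, rotPart_mul_s8, hδu]
      have hεΓ : γ * τ ∈ Γ := mul_mem hγ hτΓ
      have hεx : (γ * τ) x = x := by rw [IsometryEquiv.mul_apply, hτx, hγx]
      have hεy : (γ * τ) y = y := by
        rw [IsometryEquiv.mul_apply, hτy]
        have e1 : (2 : ℝ) • x - y = x + (x - y) := by module
        rw [e1, apply_add_sub, hγx, hcase]
        module
      have hεu := hu _ hεΓ hεx hεy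
      have h2 : rotPart γ (rotPart τ u) = u := by rw [← rotPart_mul_s8, hεu]
      have hadd : rotPart γ (u + rotPart τ u)
          = rotPart γ u + rotPart γ (rotPart τ u) := by
        have h := γ.toRealLinearIsometryEquiv.map_add u (rotPart τ u)
        simp only [IsometryEquiv.toRealLinearIsometryEquiv_apply] at h
        unfold rotPart
        exact h
      rw [hw, hadd, hγu, h2, add_comm]
  -- now w must vanish by isolation of x
  have hwzero : w = 0 := by
    by_contra hne0
    have hnw : 0 < ‖w‖ := norm_pos_iff.mpr hne0
    set s : ℝ := ε / (2 * ‖w‖) with hs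
    have hspos : 0 < s := by positivity
    have hmem : x + s • w ∈ FixSet H ∩ Metric.ball x ε := by
      constructor
      · intro h hh
        have hhx : h x = x := hfixx h hh
        have hhw : rotPart h w = w := key h (hle hh) hhx
        rw [apply_add, hhx, rotPart_smul_s8, hhw]
      · rw [Metric.mem_ball, dist_eq_norm, add_sub_cancel_left, norm_smul,
          Real.norm_of_nonneg hspos.le]
        rw [hs]
        rw [div_mul_eq_mul_div, mul_comm]
        rw [div_lt_iff₀ (by positivity)]
        nlinarith
    rw [hball] at hmem
    have : x + s • w = x := hmem
    have hsw : s • w = 0 := by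
      have := congrArg (fun t => t - x) this
      simpa using this
    rcases smul_eq_zero.mp hsw with h | h
    · exact absurd h (ne_of_gt hspos)
    · exact hne0 h
  have h0 : u + rotPart τ u = 0 := by rw [← hw, hwzero]
  exact eq_neg_of_add_eq_zero_right h0
  
/-- The stabilizer of a point, as a subgroup of the isometry group. -/
def stabPt (p : ES) : Subgroup (ES ≃ᵢ ES) where
  carrier := {γ | γ p = p}
  one_mem' := rfl
  mul_mem' := by
    intro a b ha hb
    simp only [Set.mem_setOf_eq] at *
    rw [IsometryEquiv.mul_apply, hb, ha]
  inv_mem' := by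
    intro a ha
    simp only [Set.mem_setOf_eq] at *
    rw [← ha]
    nth_rewrite 2 [ha]
    exact a.inv_apply_self p

lemma mem_stabPt {p : ES} {γ : ES ≃ᵢ ES} : γ ∈ stabPt p ↔ γ p = p := Iff.rfl

end AuxFourthPoint

theorem fourth_point_general {n : ℕ} (hn : 1 ≤ n)
    (Γ : Subgroup (EuclideanSpace ℝ (Fin n) ≃ᵢ EuclideanSpace ℝ (Fin n)))
    (hdisc : ProperlyDisc Γ) (hcc : CocompactAct Γ)
    (hne : (SingSet Γ).Nonempty) (hrefl : ReflProp Γ) (hmid : MidProp Γ)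
    (X Y Z : EuclideanSpace ℝ (Fin n)) (hX : X ∈ SingSet Γ)
    (hY : Y ∈ SS Γ X) (hZ : Z ∈ SS Γ X)
    (hstab : {γ : EuclideanSpace ℝ (Fin n) ≃ᵢ EuclideanSpace ℝ (Fin n) |
        γ ∈ Γ ∧ γ X = X ∧ γ Y = Y} =
      {γ : EuclideanSpace ℝ (Fin n) ≃ᵢ EuclideanSpace ℝ (Fin n) |
        γ ∈ Γ ∧ γ X = X ∧ γ Z = Z}) :
    (∀ γ ∈ Γ, γ Y = Y →
      (∀ p ∈ affineSpan ℝ ({X, Y, Z} : Set (EuclideanSpace ℝ (Fin n))), γ p = p) ∨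
      (∀ p ∈ affineSpan ℝ ({X, Y, Z} : Set (EuclideanSpace ℝ (Fin n))),
        γ p = (2 : ℝ) • Y - p)) ∧
    Y + (Z - X) ∈ SingSet Γ := by
  obtain ⟨hYs, hYneX, hYr⟩ := hY
  obtain ⟨hZs, hZneX, hZr⟩ := hZ
  have hYss : Y ∈ SS Γ X := ⟨hYs, hYneX, hYr⟩
  have hXssY : X ∈ SS Γ Y :=
    ⟨hX, hYneX.symm, by have := hYr; rwa [Set.inter_comm] at this⟩
  have hXssZ : X ∈ SS Γ Z :=
    ⟨hX, hZneX.symm, by have := hZr; rwa [Set.inter_comm] at this⟩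
  have hstabYZ : ∀ γ : EuclideanSpace ℝ (Fin n) ≃ᵢ EuclideanSpace ℝ (Fin n),
      γ ∈ Γ → γ X = X → γ Y = Y → γ Z = Z := by
    intro γ h1 h2 h3
    have hmem : γ ∈ {γ : EuclideanSpace ℝ (Fin n) ≃ᵢ EuclideanSpace ℝ (Fin n) |
        γ ∈ Γ ∧ γ X = X ∧ γ Z = Z} := hstab ▸ (⟨h1, h2, h3⟩ :
      γ ∈ {γ : EuclideanSpace ℝ (Fin n) ≃ᵢ EuclideanSpace ℝ (Fin n) |
        γ ∈ Γ ∧ γ X = X ∧ γ Y = Y})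
    exact hmem.2.2
  have hstabZY : ∀ γ : EuclideanSpace ℝ (Fin n) ≃ᵢ EuclideanSpace ℝ (Fin n),
      γ ∈ Γ → γ X = X → γ Z = Z → γ Y = Y := by
    intro γ h1 h2 h3
    have hmem : γ ∈ {γ : EuclideanSpace ℝ (Fin n) ≃ᵢ EuclideanSpace ℝ (Fin n) |
        γ ∈ Γ ∧ γ X = X ∧ γ Y = Y} := hstab.symm ▸ (⟨h1, h2, h3⟩ :
      γ ∈ {γ : EuclideanSpace ℝ (Fin n) ≃ᵢ EuclideanSpace ℝ (Fin n) |
        γ ∈ Γ ∧ γ X = X ∧ γ Z = Z})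
    exact hmem.2.2
  obtain ⟨σ, hσΓ, hσY, hσX⟩ := exists_refl hrefl hYs hXssY
  obtain ⟨ρ, hρΓ, hρX, hρY⟩ := exists_refl hrefl hX hYss
  obtain ⟨ς, hςΓ, hςZ, hςX⟩ := exists_refl hrefl hZs hXssZ
  obtain ⟨HY, hHYle, hHYfix, εY, hεY, hballY⟩ := id hYs
  obtain ⟨HZ, hHZle, hHZfix, εZ, hεZ, hballZ⟩ := id hZs
  obtain ⟨HX, hHXle, hHXfix, εX, hεX, hballX⟩ := id hX
  have hσneg : ∀ u : EuclideanSpace ℝ (Fin n),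
      (∀ γ : EuclideanSpace ℝ (Fin n) ≃ᵢ EuclideanSpace ℝ (Fin n),
        γ ∈ Γ → γ Y = Y → γ X = X → rotPart γ u = u) → rotPart σ u = -u :=
    fun u hu => rot_neg hrefl hYs hXssY hHYle hHYfix hεY hballY hu hσΓ hσY hσX
  have hρneg : ∀ u : EuclideanSpace ℝ (Fin n),
      (∀ γ : EuclideanSpace ℝ (Fin n) ≃ᵢ EuclideanSpace ℝ (Fin n),
        γ ∈ Γ → γ X = X → γ Y = Y → rotPart γ u = u) → rotPart ρ u = -u :=
    fun u hu => rot_neg hrefl hX hYss hHXle hHXfix hεX hballX hu hρΓ hρX hρY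
  have hςneg : ∀ u : EuclideanSpace ℝ (Fin n),
      (∀ γ : EuclideanSpace ℝ (Fin n) ≃ᵢ EuclideanSpace ℝ (Fin n),
        γ ∈ Γ → γ Z = Z → γ X = X → rotPart γ u = u) → rotPart ς u = -u :=
    fun u hu => rot_neg hrefl hZs hXssZ hHZle hHZfix hεZ hballZ hu hςΓ hςZ hςX
  have hσZ : σ Z = (2 : ℝ) • Y - Z := by
    have h1 : rotPart σ (Z - Y) = -(Z - Y) := hσneg (Z - Y) (by
      intro γ hγ h2 h3
      have h4 : γ Z = Z := hstabYZ γ hγ h3 h2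
      rw [← rotPart_eq, h4, h2])
    have h2 : σ Z - σ Y = rotPart σ (Z - Y) := rotPart_eq σ Z Y
    rw [h1, hσY] at h2
    have h3 : σ Z = -(Z - Y) + Y := sub_eq_iff_eq_add.mp h2
    rw [h3]; module
  have hρZ : ρ Z = (2 : ℝ) • X - Z := by
    have h1 : rotPart ρ (Z - X) = -(Z - X) := hρneg (Z - X) (by
      intro γ hγ h2 h3
      have h4 : γ Z = Z := hstabYZ γ hγ h2 h3
      rw [← rotPart_eq, h4, h2])
    have h2 : ρ Z - ρ X = rotPart ρ (Z - X) := rotPart_eq ρ Z X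
    rw [h1, hρX] at h2
    have h3 : ρ Z = -(Z - X) + X := sub_eq_iff_eq_add.mp h2
    rw [h3]; module
  have hςY : ς Y = (2 : ℝ) • Z - Y := by
    have h1 : rotPart ς (Y - Z) = -(Y - Z) := hςneg (Y - Z) (by
      intro γ hγ h2 h3
      have h4 : γ Y = Y := hstabZY γ hγ h3 h2
      rw [← rotPart_eq, h4, h2])
    have h2 : ς Y - ς Z = rotPart ς (Y - Z) := rotPart_eq ς Y Z
    rw [h1, hςZ] at h2
    have h3 : ς Y = -(Y - Z) + Z := sub_eq_iff_eq_add.mp h2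
    rw [h3]; module
  constructor
  · intro γ hγ hγY
    rcases stab_cases hrefl hYs hXssY hγ hγY with hγX | hγX
    · left
      have hγZ : γ Z = Z := hstabYZ γ hγ hγX hγY
      intro q hq
      refine affineSpan_induction (p := fun r => γ r = r) hq ?_ ?_
      · intro r hr
        simp only [Set.mem_insert_iff, Set.mem_singleton_iff] at hr
        rcases hr with rfl | rfl | rfl
        exacts [hγX, hγY, hγZ]
      · intro c u v w hu hv hw
        have hcm : c • (u -ᵥ v) +ᵥ w = w + c • (u - v) := by
          rw [vsub_eq_sub, vadd_eq_add, add_comm]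
        rw [hcm, apply_add, hw, rotPart_smul_s8, ← rotPart_eq, hu, hv]
    · right
      have hσinvY : σ⁻¹ Y = Y := by
        nth_rewrite 1 [← hσY]; exact σ.inv_apply_self Y
      have hσinvX : σ⁻¹ ((2 : ℝ) • Y - X) = X := by
        rw [← hσX]; exact σ.inv_apply_self X
      have hδΓ : σ⁻¹ * γ ∈ Γ := mul_mem (inv_mem hσΓ) hγ
      have hδY : (σ⁻¹ * γ) Y = Y := by rw [IsometryEquiv.mul_apply, hγY, hσinvY]
      have hδX : (σ⁻¹ * γ) X = X := by rw [IsometryEquiv.mul_apply, hγX, hσinvX]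
      have hδZ : (σ⁻¹ * γ) Z = Z := hstabYZ _ hδΓ hδX hδY
      have hγZ : γ Z = (2 : ℝ) • Y - Z := by
        have h5 := congrArg σ hδZ
        rw [IsometryEquiv.mul_apply, IsometryEquiv.apply_inv_self] at h5
        rw [h5, hσZ]
      intro q hq
      refine affineSpan_induction (p := fun r => γ r = (2 : ℝ) • Y - r) hq ?_ ?_
      · intro r hr
        simp only [Set.mem_insert_iff, Set.mem_singleton_iff] at hr
        rcases hr with rfl | rfl | rfl
        · exact hγX
        · rw [hγY]; module
        · exact hγZ
      · intro c u v w hu hv hw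
        have hcm : c • (u -ᵥ v) +ᵥ w = w + c • (u - v) := by
          rw [vsub_eq_sub, vadd_eq_add, add_comm]
        rw [hcm, apply_add, hw, rotPart_smul_s8, ← rotPart_eq, hu, hv]
        module
  · have hgΓ : σ * (ρ * ς) ∈ Γ := mul_mem hσΓ (mul_mem hρΓ hςΓ)
    have step1 : ς (Y + (Z - X)) = X + (Z - Y) := by
      rw [apply_add_sub, hςY, hςZ, hςX]; module
    have step2 : ρ (X + (Z - Y)) = X + (Y - Z) := by
      rw [apply_add_sub, hρX, hρZ, hρY]; module
    have step3 : σ (X + (Y - Z)) = Y + (Z - X) := by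
      rw [apply_add_sub, hσX, hσY, hσZ]; module
    have hgZs : (σ * (ρ * ς)) (Y + (Z - X)) = Y + (Z - X) := by
      rw [IsometryEquiv.mul_apply, IsometryEquiv.mul_apply, step1, step2, step3]
    refine ⟨Γ ⊓ stabPt (Y + (Z - X)), inf_le_left, fun h hh => hh.2, 1, one_pos, ?_⟩
    apply Set.eq_singleton_iff_unique_mem.mpr
    constructor
    · exact ⟨fun h hh => hh.2, Metric.mem_ball_self one_pos⟩
    · intro P hP
      have hfixu : ∀ h : EuclideanSpace ℝ (Fin n) ≃ᵢ EuclideanSpace ℝ (Fin n),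
          h ∈ Γ ⊓ stabPt (Y + (Z - X)) →
          rotPart h (P - (Y + (Z - X))) = P - (Y + (Z - X)) := by
        intro h hh
        have h1 : h P = P := hP.1 h hh
        have h2 : h (Y + (Z - X)) = Y + (Z - X) := hh.2
        rw [← rotPart_eq, h1, h2]
      have hGu : ∀ γ : EuclideanSpace ℝ (Fin n) ≃ᵢ EuclideanSpace ℝ (Fin n),
          γ ∈ Γ → γ X = X → γ Y = Y →
          rotPart γ (P - (Y + (Z - X))) = P - (Y + (Z - X)) := by
        intro γ h1 h2 h3
        have h4 : γ Z = Z := hstabYZ γ h1 h2 h3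
        refine hfixu γ ⟨h1, ?_⟩
        show γ (Y + (Z - X)) = Y + (Z - X)
        rw [apply_add_sub, h3, h4, h2]
      have hgu : rotPart (σ * (ρ * ς)) (P - (Y + (Z - X))) = P - (Y + (Z - X)) :=
        hfixu _ ⟨hgΓ, hgZs⟩
      have hςu : rotPart ς (P - (Y + (Z - X))) = -(P - (Y + (Z - X))) :=
        hςneg _ (fun γ hγ h2 h3 => hGu γ hγ h3 (hstabZY γ hγ h3 h2))
      have hρu : rotPart ρ (P - (Y + (Z - X))) = -(P - (Y + (Z - X))) :=
        hρneg _ hGu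
      have hσu : rotPart σ (P - (Y + (Z - X))) = -(P - (Y + (Z - X))) :=
        hσneg _ (fun γ hγ h2 h3 => hGu γ hγ h3 h2)
      have hcalc : rotPart (σ * (ρ * ς)) (P - (Y + (Z - X)))
          = -(P - (Y + (Z - X))) := by
        rw [rotPart_mul_s8, rotPart_mul_s8, hςu, rotPart_neg_s8, hρu, neg_neg, hσu]
      have h6 : P - (Y + (Z - X)) = -(P - (Y + (Z - X))) := hgu.symm.trans hcalc
      have h7 : P - (Y + (Z - X)) + (P - (Y + (Z - X))) = 0 := by
        nth_rewrite 2 [h6]; exact add_neg_cancel _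
      have h8 : (2 : ℝ) • (P - (Y + (Z - X))) = 0 := by rw [two_smul]; exact h7
      rcases smul_eq_zero.mp h8 with h | h
      · norm_num at h
      · exact sub_eq_zero.mp h
end
end

section
/- Let Γ be a discrete cocompact subgroup of isometries of ℝⁿ such that ℰ is nonempty and Γ has the reflection property and the midpoint property. Let X, Y, Z ∈ ℰ with Y, Z ∈ 𝔖(X), and suppose the angle ∠ Y X Z (at vertex X) is not equal to π/2. Then Γ_{X,Y} = Γ_{X,Z}. -/
open Metric

noncomputable section

lemma rotPart_sub {n : ℕ} (γ : EuclideanSpace ℝ (Fin n) ≃ᵢ EuclideanSpace ℝ (Fin n))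
    (p q : EuclideanSpace ℝ (Fin n)) : rotPart γ (p - q) = γ p - γ q := by
  have h := γ.toRealLinearIsometryEquiv.map_sub p q
  simp only [IsometryEquiv.toRealLinearIsometryEquiv_apply] at h
  simp only [rotPart, h]
  abel

lemma key_fix {n : ℕ}
    (Γ : Subgroup (EuclideanSpace ℝ (Fin n) ≃ᵢ EuclideanSpace ℝ (Fin n)))
    (hrefl : ReflProp Γ) (X Y Z : EuclideanSpace ℝ (Fin n)) (hX : X ∈ SingSet Γ)
    (hZ : Z ∈ SS Γ X)
    (hangle : EuclideanGeometry.angle Y X Z ≠ Real.pi / 2)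
    (γ : EuclideanSpace ℝ (Fin n) ≃ᵢ EuclideanSpace ℝ (Fin n))
    (hγ : γ ∈ Γ) (hγX : γ X = X) (hγY : γ Y = Y) : γ Z = Z := by
  have hrot : rotPart γ (X - Z) ∈ rotSet Γ X (X - Z) := ⟨γ, hγ, hγX, rfl⟩
  rw [hrefl X hX Z hZ] at hrot
  have heq : rotPart γ (X - Z) = X - γ Z := by rw [rotPart_sub, hγX]
  rcases hrot with h | h
  · -- X - γ Z = X - Z
    rw [heq] at h
    rwa [sub_right_inj] at h
  · -- X - γ Z = Z - X, i.e. γ Z = 2X - Z : contradiction with angle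
    exfalso
    rw [heq] at h
    have hγZ : γ Z = X - (Z - X) := by
      have : X - (X - γ Z) = X - (Z - X) := by rw [h]
      simpa using this
    have hd : dist (γ Y) (γ Z) = dist Y Z := γ.isometry.dist_eq Y Z
    rw [hγY, hγZ] at hd
    have h1 : Y - (X - (Z - X)) = (Y - X) + (Z - X) := by abel
    have h2 : Y - Z = (Y - X) - (Z - X) := by abel
    set u := Y - X
    set v := Z - X
    have hd2 : ‖u + v‖ = ‖u - v‖ := by
      rw [dist_eq_norm, dist_eq_norm, h1, h2] at hd
      exact hd
    have hinner : inner ℝ u v = (0 : ℝ) := by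
      have h1 := norm_add_sq_real u v
      have h2 := norm_sub_sq_real u v
      rw [hd2] at h1
      nlinarith [h1, h2]
    apply hangle
    rw [EuclideanGeometry.angle, vsub_eq_sub, vsub_eq_sub]
    exact InnerProductGeometry.inner_eq_zero_iff_angle_eq_pi_div_two u v |>.mp hinner

theorem angle_ne_pi_div_two_stabilizers_eq {n : ℕ} (hn : 1 ≤ n)
    (Γ : Subgroup (EuclideanSpace ℝ (Fin n) ≃ᵢ EuclideanSpace ℝ (Fin n)))
    (hdisc : ProperlyDisc Γ) (hcc : CocompactAct Γ)
    (hne : (SingSet Γ).Nonempty) (hrefl : ReflProp Γ) (hmid : MidProp Γ)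
    (X Y Z : EuclideanSpace ℝ (Fin n)) (hX : X ∈ SingSet Γ)
    (hY : Y ∈ SS Γ X) (hZ : Z ∈ SS Γ X)
    (hangle : EuclideanGeometry.angle Y X Z ≠ Real.pi / 2) :
    {γ : EuclideanSpace ℝ (Fin n) ≃ᵢ EuclideanSpace ℝ (Fin n) |
        γ ∈ Γ ∧ γ X = X ∧ γ Y = Y} =
      {γ : EuclideanSpace ℝ (Fin n) ≃ᵢ EuclideanSpace ℝ (Fin n) |
        γ ∈ Γ ∧ γ X = X ∧ γ Z = Z} := by
  ext γ
  simp only [Set.mem_setOf_eq]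
  constructor
  · rintro ⟨h1, h2, h3⟩
    exact ⟨h1, h2, key_fix Γ hrefl X Y Z hX hZ hangle γ h1 h2 h3⟩
  · rintro ⟨h1, h2, h3⟩
    refine ⟨h1, h2, key_fix Γ hrefl X Z Y hX hY ?_ γ h1 h2 h3⟩
    rw [EuclideanGeometry.angle_comm]
    exact hangle
end
end

section
/- Let Γ be a discrete cocompact subgroup of isometries of ℝⁿ such that ℰ is nonempty and Γ has the reflection property. Then 𝔖(X) is centrally symmetric about each X ∈ ℰ: if Y ∈ 𝔖(X), then the point 2X − Y also belongs to 𝔖(X). -/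
open Metric

noncomputable section

section Aux

variable {n : ℕ}

private lemma isom_affine (γ : EuclideanSpace ℝ (Fin n) ≃ᵢ EuclideanSpace ℝ (Fin n))
    (z w : EuclideanSpace ℝ (Fin n)) :
    γ z - γ w = γ.toRealLinearIsometryEquiv (z - w) := by
  simp [map_sub]

private lemma singset_smul_mem {Γ : Subgroup (EuclideanSpace ℝ (Fin n) ≃ᵢ EuclideanSpace ℝ (Fin n))}
    {γ : EuclideanSpace ℝ (Fin n) ≃ᵢ EuclideanSpace ℝ (Fin n)} (hγ : γ ∈ Γ)
    {x : EuclideanSpace ℝ (Fin n)} (hx : x ∈ SingSet Γ) : γ x ∈ SingSet Γ := by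
  obtain ⟨H, hHΓ, hxF, ε, hε, hiso⟩ := hx
  have hfix : ∀ z, z ∈ FixSet (H.map (MulAut.conj γ).toMonoidHom) ↔ γ⁻¹ z ∈ FixSet H := by
    intro z
    constructor
    · intro hz h hh
      have h1 : (γ * h * γ⁻¹) z = z :=
        hz _ (Subgroup.mem_map.mpr ⟨h, hh, rfl⟩)
      have h2 : γ⁻¹ ((γ * h * γ⁻¹) z) = γ⁻¹ z := by rw [h1]
      simpa [IsometryEquiv.mul_apply] using h2
    · intro hz h' hh'
      rw [Subgroup.mem_map] at hh'
      obtain ⟨h, hh, rfl⟩ := hh'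
      have h1 : h (γ⁻¹ z) = γ⁻¹ z := hz h hh
      show (γ * h * γ⁻¹) z = z
      simp [IsometryEquiv.mul_apply, h1]
  have hdist : ∀ z, dist z (γ x) = dist (γ⁻¹ z) x := by
    intro z
    conv_lhs => rw [← γ.apply_inv_self z]
    exact γ.dist_eq _ _
  refine ⟨H.map (MulAut.conj γ).toMonoidHom, ?_, ?_, ε, hε, ?_⟩
  · intro a ha
    rw [Subgroup.mem_map] at ha
    obtain ⟨h, hh, rfl⟩ := ha
    exact mul_mem (mul_mem hγ (hHΓ hh)) (inv_mem hγ)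
  · exact (hfix (γ x)).mpr (by simpa using hxF)
  · ext z
    simp only [Set.mem_inter_iff, mem_ball, Set.mem_singleton_iff, hfix, hdist]
    constructor
    · rintro ⟨h1, h2⟩
      have : γ⁻¹ z ∈ FixSet H ∩ ball x ε := ⟨h1, by simpa [mem_ball] using h2⟩
      rw [hiso, Set.mem_singleton_iff] at this
      have := congrArg γ this
      simpa using this
    · rintro rfl
      have hx' : x ∈ FixSet H ∩ ball x ε := ⟨hxF, mem_ball_self hε⟩
      refine ⟨by simpa using hx'.1, by simpa using hε⟩

private lemma vor_image (γ : EuclideanSpace ℝ (Fin n) ≃ᵢ EuclideanSpace ℝ (Fin n))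
    {S : Set (EuclideanSpace ℝ (Fin n))} (hS : ∀ y, y ∈ S ↔ γ y ∈ S)
    (x : EuclideanSpace ℝ (Fin n)) :
    ⇑γ '' Vor S x = Vor S (γ x) := by
  ext z
  constructor
  · rintro ⟨w, hw, rfl⟩ y hy
    have hy' : γ⁻¹ y ∈ S := (hS _).mpr (by simpa using hy)
    have := hw _ hy'
    calc dist (γ w) (γ x) = dist w x := γ.dist_eq _ _
      _ ≤ dist w (γ⁻¹ y) := this
      _ = dist (γ w) (γ (γ⁻¹ y)) := (γ.dist_eq _ _).symm
      _ = dist (γ w) y := by rw [γ.apply_inv_self]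
  · intro hz
    refine ⟨γ⁻¹ z, ?_, γ.apply_inv_self z⟩
    intro y hy
    have := hz (γ y) ((hS y).mp hy)
    calc dist (γ⁻¹ z) x = dist (γ (γ⁻¹ z)) (γ x) := (γ.dist_eq _ _).symm
      _ = dist z (γ x) := by rw [γ.apply_inv_self]
      _ ≤ dist z (γ y) := this
      _ = dist (γ (γ⁻¹ z)) (γ y) := by rw [γ.apply_inv_self]
      _ = dist (γ⁻¹ z) y := γ.dist_eq _ _

private lemma finrank_span_image (γ : EuclideanSpace ℝ (Fin n) ≃ᵢ EuclideanSpace ℝ (Fin n))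
    (S : Set (EuclideanSpace ℝ (Fin n))) :
    Module.finrank ℝ (affineSpan ℝ (⇑γ '' S)).direction =
      Module.finrank ℝ (affineSpan ℝ S).direction := by
  set f : EuclideanSpace ℝ (Fin n) ≃ᵃ[ℝ] EuclideanSpace ℝ (Fin n) :=
    (γ.toRealLinearIsometryEquiv.toLinearEquiv.toAffineEquiv).trans
      (AffineEquiv.constVAdd ℝ (EuclideanSpace ℝ (Fin n)) (γ 0)) with hfdef
  have hcoe : ⇑γ '' S = ⇑f.toAffineMap '' S := by
    funext z
    simp [hfdef, AffineEquiv.trans_apply, vadd_eq_add]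
  have hlin : f.toAffineMap.linear =
      (γ.toRealLinearIsometryEquiv.toLinearEquiv :
        EuclideanSpace ℝ (Fin n) →ₗ[ℝ] EuclideanSpace ℝ (Fin n)) := rfl
  rw [hcoe, ← AffineSubspace.map_span, AffineSubspace.map_direction, hlin]
  exact LinearEquiv.finrank_map_eq _ _

end Aux

theorem SS_centrally_symmetric {n : ℕ} (hn : 1 ≤ n)
    (Γ : Subgroup (EuclideanSpace ℝ (Fin n) ≃ᵢ EuclideanSpace ℝ (Fin n)))
    (hdisc : ProperlyDisc Γ) (hcc : CocompactAct Γ)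
    (hne : (SingSet Γ).Nonempty) (hrefl : ReflProp Γ)
    (X Y : EuclideanSpace ℝ (Fin n)) (hX : X ∈ SingSet Γ) (hY : Y ∈ SS Γ X) :
    (2 : ℝ) • X - Y ∈ SS Γ X := by
  obtain ⟨hYE, hYne, hYdim⟩ := hY
  have hset := hrefl X hX Y ⟨hYE, hYne, hYdim⟩
  have hmem : Y - X ∈ rotSet Γ X (X - Y) := by
    rw [hset]; right; rfl
  obtain ⟨γ, hγΓ, hγX, hγrot⟩ := hmem
  have hL : γ.toRealLinearIsometryEquiv (X - Y) = Y - X := by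
    simpa [rotPart] using hγrot
  have hγY : γ Y = (2 : ℝ) • X - Y := by
    have h1 : γ Y - γ X = γ.toRealLinearIsometryEquiv (Y - X) := isom_affine γ Y X
    have h2 : γ.toRealLinearIsometryEquiv (Y - X) = X - Y := by
      rw [show Y - X = -(X - Y) by abel, map_neg, hL]; abel
    rw [hγX, h2] at h1
    have : γ Y = X + (X - Y) := by
      rw [← h1]; abel
    rw [this, two_smul]; abel
  have hEinv : ∀ y, y ∈ SingSet Γ ↔ γ y ∈ SingSet Γ := by
    intro y
    constructor
    · exact fun h => singset_smul_mem hγΓ h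
    · intro h
      have := singset_smul_mem (inv_mem hγΓ) h
      simpa using this
  refine ⟨?_, ?_, ?_⟩
  · rw [← hγY]; exact singset_smul_mem hγΓ hYE
  · intro h
    apply hYne
    have h' : X + X - ((2 : ℝ) • X - Y) = X + X - X := by rw [h]
    rw [two_smul] at h'
    have : Y = X := by
      have := h'
      abel_nf at this
      linear_combination (norm := module) this
    rw [this]
  · rw [← hγY]
    have himg : Vor (SingSet Γ) X ∩ Vor (SingSet Γ) (γ Y) =
        ⇑γ '' (Vor (SingSet Γ) X ∩ Vor (SingSet Γ) Y) := by
      rw [Set.image_inter γ.injective, vor_image γ hEinv, vor_image γ hEinv, hγX]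
    rw [himg, finrank_span_image]
    exact hYdim
end
end

section
/- Let Γ be a discrete cocompact subgroup of isometries of ℝⁿ such that ℰ is nonempty. Then for every X ∈ ℰ the set 𝔖(X) contains at least n points X_1, …, X_n such that the vectors X_1 − X, …, X_n − X are linearly independent. -/
open Metric
open scoped RealInnerProductSpace

noncomputable section

lemma midpoint_fix {n : ℕ}
    {H : Subgroup (EuclideanSpace ℝ (Fin n) ≃ᵢ EuclideanSpace ℝ (Fin n))}
    {x p : EuclideanSpace ℝ (Fin n)} (hx : x ∈ FixSet H) (hp : p ∈ FixSet H) :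
    midpoint ℝ x p ∈ FixSet H := by
  intro h hh
  rw [IsometryEquiv.map_midpoint, hx h hh, hp h hh]

lemma mem_singSet_iff {n : ℕ}
    (Γ : Subgroup (EuclideanSpace ℝ (Fin n) ≃ᵢ EuclideanSpace ℝ (Fin n)))
    (x : EuclideanSpace ℝ (Fin n)) :
    x ∈ SingSet Γ ↔ ∃ H ≤ Γ, FixSet H = {x} := by
  constructor
  · rintro ⟨H, hHΓ, hxF, ε, hε, hball⟩
    refine ⟨H, hHΓ, ?_⟩
    apply Set.eq_singleton_iff_unique_mem.mpr
    refine ⟨hxF, fun b hb => ?_⟩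
    by_contra hbx
    -- points x + (2⁻¹)^k • (b - x) are in FixSet H
    have key : ∀ k : ℕ, x + ((2:ℝ)⁻¹)^k • (b - x) ∈ FixSet H := by
      intro k
      induction k with
      | zero => simpa using hb
      | succ k ih =>
        have : x + ((2:ℝ)⁻¹)^(k+1) • (b - x) = midpoint ℝ x (x + ((2:ℝ)⁻¹)^k • (b - x)) := by
          have h2 := midpoint_sub_left (R := ℝ) (v₁ := x) (v₂ := x + ((2:ℝ)⁻¹)^k • (b - x))
          rw [invOf_eq_inv (2:ℝ)] at h2
          have : midpoint ℝ x (x + ((2:ℝ)⁻¹)^k • (b - x)) = x + (2:ℝ)⁻¹ • (x + ((2:ℝ)⁻¹)^k • (b - x) - x) := by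
            rw [← h2]; abel
          rw [this, pow_succ]
          rw [show x + ((2:ℝ)⁻¹)^k • (b - x) - x = ((2:ℝ)⁻¹)^k • (b - x) by abel]
          rw [smul_smul]; ring_nf
        rw [this]
        exact midpoint_fix hxF ih
    have hbxne : b - x ≠ 0 := sub_ne_zero.mpr hbx
    have hd : 0 < ‖b - x‖ := norm_pos_iff.mpr hbxne
    obtain ⟨k, hk⟩ := exists_pow_lt_of_lt_one (div_pos hε hd) (by norm_num : (2:ℝ)⁻¹ < 1)
    have hmem : x + ((2:ℝ)⁻¹)^k • (b - x) ∈ FixSet H ∩ ball x ε := by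
      refine ⟨key k, ?_⟩
      rw [mem_ball, dist_eq_norm]
      have : x + ((2:ℝ)⁻¹)^k • (b - x) - x = ((2:ℝ)⁻¹)^k • (b - x) := by abel
      rw [this, norm_smul]
      have h2 : 0 < ((2:ℝ)⁻¹)^k := by positivity
      calc ‖((2:ℝ)⁻¹)^k‖ * ‖b - x‖ = ((2:ℝ)⁻¹)^k * ‖b - x‖ := by
            rw [Real.norm_of_nonneg h2.le]
        _ < (ε / ‖b - x‖) * ‖b - x‖ := by
            apply mul_lt_mul_of_pos_right hk hd
        _ = ε := by field_simp
    rw [hball] at hmem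
    have : ((2:ℝ)⁻¹)^k • (b - x) = 0 := by
      have := hmem
      simp only [Set.mem_singleton_iff] at this
      have := sub_eq_zero.mpr this
      simpa using this
    exact hbxne (by simpa [pow_ne_zero] using (smul_eq_zero.mp this).resolve_left (by positivity))
  · rintro ⟨H, hHΓ, hfix⟩
    refine ⟨H, hHΓ, by rw [hfix]; rfl, 1, one_pos, ?_⟩
    rw [hfix]
    ext z
    simp only [Set.mem_inter_iff, Set.mem_singleton_iff, mem_ball]
    constructor
    · rintro ⟨h, _⟩; exact h
    · rintro rfl; exact ⟨rfl, by simp⟩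

lemma fixSet_map {n : ℕ}
    (H : Subgroup (EuclideanSpace ℝ (Fin n) ≃ᵢ EuclideanSpace ℝ (Fin n)))
    (γ : EuclideanSpace ℝ (Fin n) ≃ᵢ EuclideanSpace ℝ (Fin n)) :
    FixSet (Subgroup.map (MulAut.conj γ).toMonoidHom H) = γ '' FixSet H := by
  ext z
  simp only [FixSet, Set.mem_setOf_eq, Set.mem_image]
  constructor
  · intro hz
    refine ⟨γ.symm z, fun h hh => ?_, by simp⟩
    have := hz (γ * h * γ⁻¹) ⟨h, hh, rfl⟩
    have h2 : γ (h (γ⁻¹ z)) = z := this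
    have : h (γ.symm z) = γ.symm z := by
      apply γ.injective
      simpa using (show γ (h (γ.symm z)) = z from h2)
    exact this
  · rintro ⟨w, hw, rfl⟩
    rintro h ⟨g, hg, rfl⟩
    show γ (g (γ⁻¹ (γ w))) = γ w
    congr 1
    rw [show (γ⁻¹ : _) (γ w) = w from γ.symm_apply_apply w]
    exact hw g hg

lemma singSet_smul {n : ℕ}
    {Γ : Subgroup (EuclideanSpace ℝ (Fin n) ≃ᵢ EuclideanSpace ℝ (Fin n))}
    {γ : EuclideanSpace ℝ (Fin n) ≃ᵢ EuclideanSpace ℝ (Fin n)} (hγ : γ ∈ Γ)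
    {x : EuclideanSpace ℝ (Fin n)} (hx : x ∈ SingSet Γ) : γ x ∈ SingSet Γ := by
  rw [mem_singSet_iff] at hx ⊢
  obtain ⟨H, hHΓ, hfix⟩ := hx
  refine ⟨Subgroup.map (MulAut.conj γ).toMonoidHom H, ?_, ?_⟩
  · rintro h ⟨g, hg, rfl⟩
    exact Γ.mul_mem (Γ.mul_mem hγ (hHΓ hg)) (Γ.inv_mem hγ)
  · rw [fixSet_map, hfix, Set.image_singleton]

lemma locFin {n : ℕ}
    {Γ : Subgroup (EuclideanSpace ℝ (Fin n) ≃ᵢ EuclideanSpace ℝ (Fin n))}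
    (hdisc : ProperlyDisc Γ) (c : EuclideanSpace ℝ (Fin n)) (r : ℝ) :
    (SingSet Γ ∩ closedBall c r).Finite := by
  classical
  set K := closedBall c r
  have hK : IsCompact K := isCompact_closedBall c r
  set G := {γ : EuclideanSpace ℝ (Fin n) ≃ᵢ EuclideanSpace ℝ (Fin n) |
      γ ∈ Γ ∧ ((γ '' K) ∩ K).Nonempty}
  have hG : G.Finite := hdisc K hK
  -- for each x in SingSet ∩ K choose a subgroup with FixSet = {x}
  have hch : ∀ x ∈ SingSet Γ ∩ K, ∃ H : Subgroup (EuclideanSpace ℝ (Fin n) ≃ᵢ EuclideanSpace ℝ (Fin n)),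
      H ≤ Γ ∧ FixSet H = {x} := by
    intro x hx
    exact (mem_singSet_iff Γ x).mp hx.1
  choose! Hf hHf using hch
  have hmaps : ∀ x ∈ SingSet Γ ∩ K, ((Hf x : Subgroup _) : Set (EuclideanSpace ℝ (Fin n) ≃ᵢ EuclideanSpace ℝ (Fin n))) ⊆ G := by
    intro x hx h hh
    refine ⟨(hHf x hx).1 hh, x, ⟨x, hx.2, ?_⟩, hx.2⟩
    have : x ∈ FixSet (Hf x) := by rw [(hHf x hx).2]; rfl
    exact this h hh
  have hinj : Set.InjOn (fun x => ((Hf x : Subgroup _) : Set (EuclideanSpace ℝ (Fin n) ≃ᵢ EuclideanSpace ℝ (Fin n)))) (SingSet Γ ∩ K) := by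
    intro x hx y hy hxy
    have h1 : FixSet (Hf x) = {x} := (hHf x hx).2
    have h2 : FixSet (Hf y) = {y} := (hHf y hy).2
    have : Hf x = Hf y := SetLike.coe_injective hxy
    rw [this, h2] at h1
    exact (Set.singleton_eq_singleton_iff.mp h1).symm
  have : ((fun x => ((Hf x : Subgroup _) : Set (EuclideanSpace ℝ (Fin n) ≃ᵢ EuclideanSpace ℝ (Fin n)))) '' (SingSet Γ ∩ K)).Finite :=
    Set.Finite.subset hG.finite_subsets (by rintro _ ⟨x, hx, rfl⟩; exact hmaps x hx)
  exact Set.Finite.of_finite_image this hinj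

lemma relDense {n : ℕ}
    {Γ : Subgroup (EuclideanSpace ℝ (Fin n) ≃ᵢ EuclideanSpace ℝ (Fin n))}
    (hcc : CocompactAct Γ) {X : EuclideanSpace ℝ (Fin n)} (hX : X ∈ SingSet Γ) :
    ∃ R > 0, ∀ z : EuclideanSpace ℝ (Fin n), ∃ e ∈ SingSet Γ, dist z e ≤ R := by
  obtain ⟨K, hKc, hKu⟩ := hcc
  -- K is nonempty
  have hKne : K.Nonempty := by
    by_contra h
    rw [Set.not_nonempty_iff_eq_empty] at h
    subst h
    have : (X : EuclideanSpace ℝ (Fin n)) ∈ (⋃ γ ∈ Γ, γ '' (∅:Set _)) := by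
      rw [hKu]; trivial
    simpa using this
  obtain ⟨k₀, hk₀⟩ := hKne
  obtain ⟨R₀', hR₀'⟩ := hKc.isBounded.subset_closedBall k₀
  set R₀ := max R₀' 0 with hR₀def
  have hR₀ : K ⊆ closedBall k₀ R₀ := hR₀'.trans (closedBall_subset_closedBall (le_max_left _ _))
  have hR₀nn : 0 ≤ R₀ := le_max_right _ _
  refine ⟨2 * R₀ + 1, by positivity, fun z => ?_⟩
  have hz : z ∈ ⋃ γ ∈ Γ, γ '' K := by rw [hKu]; trivial
  have hXu : X ∈ ⋃ γ ∈ Γ, γ '' K := by rw [hKu]; trivial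
  simp only [Set.mem_iUnion, Set.mem_image] at hz hXu
  obtain ⟨γ, hγ, k, hk, hzk⟩ := hz
  obtain ⟨γ₀, hγ₀, kx, hkx, hXk⟩ := hXu
  refine ⟨(γ * γ₀⁻¹) X, singSet_smul (Γ.mul_mem hγ (Γ.inv_mem hγ₀)) hX, ?_⟩
  have he : (γ * γ₀⁻¹) X = γ kx := by
    show γ (γ₀⁻¹ X) = γ kx
    congr 1
    rw [← hXk]
    exact γ₀.symm_apply_apply kx
  rw [he, ← hzk]
  have : dist (γ k) (γ kx) = dist k kx := γ.isometry.dist_eq k kx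
  rw [this]
  calc dist k kx ≤ dist k k₀ + dist k₀ kx := dist_triangle _ _ _
    _ ≤ R₀ + R₀ := by
        have h1 := hR₀ hk
        have h2 := hR₀ hkx
        rw [mem_closedBall] at h1 h2
        rw [dist_comm k₀ kx]
        linarith
    _ ≤ 2 * R₀ + 1 := by linarith

lemma expand_sq {n : ℕ} (z X y : EuclideanSpace ℝ (Fin n)) :
    ‖z - X‖^2 - ‖z - y‖^2 = 2*⟪y - X, z⟫ - (‖y‖^2 - ‖X‖^2) := by
  rw [norm_sub_sq_real z X, norm_sub_sq_real z y, inner_sub_left,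
    real_inner_comm y z, real_inner_comm X z]
  ring

lemma dist_le_dist_iff_inner {n : ℕ} (X y z : EuclideanSpace ℝ (Fin n)) :
    dist z X ≤ dist z y ↔ ⟪y - X, z⟫ ≤ (‖y‖^2 - ‖X‖^2)/2 := by
  rw [dist_eq_norm, dist_eq_norm,
    ← pow_le_pow_iff_left₀ (norm_nonneg _) (norm_nonneg _) (two_ne_zero)]
  have := expand_sq z X y
  constructor <;> intro h <;> nlinarith [this]

lemma dist_lt_dist_iff_inner {n : ℕ} (X y z : EuclideanSpace ℝ (Fin n)) :
    dist z X < dist z y ↔ ⟪y - X, z⟫ < (‖y‖^2 - ‖X‖^2)/2 := by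
  rw [dist_eq_norm, dist_eq_norm,
    ← pow_lt_pow_iff_left₀ (norm_nonneg _) (norm_nonneg _) (two_ne_zero)]
  have := expand_sq z X y
  constructor <;> intro h <;> nlinarith [this]

lemma finrank_ker_inner {n : ℕ} {v : EuclideanSpace ℝ (Fin n)} (hv : v ≠ 0) :
    Module.finrank ℝ (LinearMap.ker ((innerSL ℝ v).toLinearMap)) = n - 1 := by
  have h1 := LinearMap.finrank_range_add_finrank_ker ((innerSL ℝ v).toLinearMap)
  have hr : LinearMap.range ((innerSL ℝ v).toLinearMap) = ⊤ := by
    rw [LinearMap.range_eq_top]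
    intro cc
    refine ⟨(cc / ⟪v, v⟫) • v, ?_⟩
    have hvv : ⟪v, v⟫ ≠ 0 := inner_self_ne_zero.mpr hv
    show ⟪v, (cc / ⟪v, v⟫) • v⟫ = cc
    rw [real_inner_smul_right, div_mul_cancel₀ _ hvv]
  rw [hr, finrank_top, Module.finrank_self] at h1
  rw [finrank_euclideanSpace_fin] at h1
  omega

set_option maxHeartbeats 1000000 in
lemma span_SS_top {n : ℕ} (hn : 1 ≤ n)
    {Γ : Subgroup (EuclideanSpace ℝ (Fin n) ≃ᵢ EuclideanSpace ℝ (Fin n))}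
    (hdisc : ProperlyDisc Γ) (hcc : CocompactAct Γ)
    {X : EuclideanSpace ℝ (Fin n)} (hX : X ∈ SingSet Γ) :
    Submodule.span ℝ ((fun y => y - X) '' SS Γ X) = ⊤ := by
  classical
  by_contra hspan
  -- get a nonzero orthogonal vector u
  obtain ⟨u, huo, hu0⟩ : ∃ u, u ∈ (Submodule.span ℝ ((fun y => y - X) '' SS Γ X))ᗮ ∧ u ≠ 0 := by
    by_contra h
    push_neg at h
    have : (Submodule.span ℝ ((fun y => y - X) '' SS Γ X))ᗮ = ⊥ := by
      rw [Submodule.eq_bot_iff]; exact h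
    exact hspan (Submodule.orthogonal_eq_bot_iff.mp this)
  have hperp : ∀ y ∈ SS Γ X, ⟪y - X, u⟫ = 0 := by
    intro y hy
    exact (Submodule.mem_orthogonal _ u).mp huo (y - X)
      (Submodule.subset_span ⟨y, hy, rfl⟩)
  set E := SingSet Γ with hE
  obtain ⟨R, hRpos, hdense⟩ := relDense hcc hX
  set ρ : ℝ := 4*R+6 with hρ
  have hCfin : ((E ∩ closedBall X ρ) \ {X}).Finite :=
    ((locFin hdisc X ρ).subset Set.diff_subset)
  obtain ⟨CF, hCFmem'⟩ : ∃ CF : Finset (EuclideanSpace ℝ (Fin n)),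
      ∀ y, (y ∈ CF ↔ (y ∈ E ∧ dist y X ≤ ρ ∧ y ≠ X)) := by
    refine ⟨hCfin.toFinset, fun y => ?_⟩
    rw [Set.Finite.mem_toFinset]
    simp only [Set.mem_diff, Set.mem_inter_iff, mem_closedBall, Set.mem_singleton_iff]
    tauto
  have hCFmem : ∀ {y}, y ∈ CF ↔ (y ∈ E ∧ dist y X ≤ ρ ∧ y ≠ X) := fun {y} => hCFmem' y
  set c : EuclideanSpace ℝ (Fin n) → ℝ := fun y => (‖y‖^2 - ‖X‖^2)/2 with hc
  set PF : Finset (EuclideanSpace ℝ (Fin n)) → Set (EuclideanSpace ℝ (Fin n)) :=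
    fun D => {z | ∀ y ∈ D, ⟪y - X, z⟫ ≤ c y} with hPF
  -- X satisfies all constraints strictly
  have hXstrict : ∀ y ∈ CF, ⟪y - X, X⟫ < c y := by
    intro y hy
    rw [← dist_lt_dist_iff_inner]
    rw [dist_self]
    exact dist_pos.mpr (Ne.symm (hCFmem.mp hy).2.2)
  -- boundedness of the polytope
  have hstep : ∀ z ∈ PF CF, dist z X ≤ 2*R+2 → dist z X ≤ R := by
    intro z hz hz2
    obtain ⟨e, heE, hze⟩ := hdense z
    by_cases heX : e = X
    · rw [heX] at hze; exact hze
    · have heC : e ∈ CF := by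
        rw [hCFmem]
        refine ⟨heE, ?_, heX⟩
        calc dist e X ≤ dist e z + dist z X := dist_triangle _ _ _
          _ ≤ R + (2*R+2) := by rw [dist_comm e z]; linarith
          _ ≤ ρ := by rw [hρ]; linarith
      have := hz e heC
      rw [← dist_le_dist_iff_inner] at this
      linarith [this.trans hze]
  have hPbdd : ∀ z ∈ PF CF, dist z X ≤ R := by
    intro z hz
    by_contra hzR
    push_neg at hzR
    by_cases hz2 : dist z X ≤ 2*R+2
    · linarith [hstep z hz hz2]
    · push_neg at hz2
      have hdzpos : (0:ℝ) < dist z X := by linarith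
      set t : ℝ := (R+1)/dist z X with ht
      have ht0 : 0 < t := by positivity
      have ht1 : t < 1 := by
        rw [ht, div_lt_one hdzpos]; linarith
      set w : EuclideanSpace ℝ (Fin n) := X + t • (z - X) with hw
      have hwP : w ∈ PF CF := by
        intro y hy
        have hcomb : ⟪y - X, w⟫ = (1-t) * ⟪y - X, X⟫ + t * ⟪y - X, z⟫ := by
          rw [hw, show X + t • (z - X) = (1-t) • X + t • z by module,
            inner_add_right, real_inner_smul_right, real_inner_smul_right]
        rw [hcomb]
        have h1 : ⟪y - X, X⟫ < c y := hXstrict y hy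
        have h2 : ⟪y - X, z⟫ ≤ c y := hz y hy
        nlinarith
      have hwd : dist w X = R+1 := by
        rw [hw, dist_eq_norm, show X + t • (z - X) - X = t • (z - X) by abel,
          norm_smul, Real.norm_eq_abs, abs_of_pos ht0, ← dist_eq_norm, ht]
        field_simp
      have := hstep w hwP (by rw [hwd]; linarith)
      rw [hwd] at this; linarith
  -- points of the polytope near X are in the Voronoi cell of X
  have hPVor : ∀ z ∈ PF CF, dist z X ≤ R+1 → z ∈ Vor E X := by
    intro z hz hzR e heE
    by_cases heX : e = X
    · rw [heX]
    · by_cases heρ : dist e X ≤ ρ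
      · have heC : e ∈ CF := hCFmem.mpr ⟨heE, heρ, heX⟩
        rw [dist_le_dist_iff_inner]
        exact hz e heC
      · push_neg at heρ
        calc dist z X ≤ R+1 := hzR
          _ ≤ ρ - (R+1) := by rw [hρ]; linarith
          _ ≤ dist e X - dist z X := by linarith
          _ ≤ dist z e := by
              have := dist_triangle e z X
              rw [dist_comm e z] at this
              linarith
  -- minimal subfamily with the same polytope
  set T : Set ℕ := {k | ∃ D : Finset (EuclideanSpace ℝ (Fin n)), D ⊆ CF ∧ D.card = k ∧ PF D = PF CF} with hT
  have hTne : T.Nonempty := ⟨CF.card, CF, Finset.Subset.refl _, rfl, rfl⟩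
  obtain ⟨D, hDsub, hDcard, hDP⟩ := Nat.sInf_mem hTne
  -- every constraint in D is essential
  have hess : ∀ y ∈ D, ∃ w ∈ PF (D.erase y), w ∉ PF D := by
    intro y hy
    by_contra h
    push_neg at h
    have hPe : PF (D.erase y) = PF D := by
      apply Set.eq_of_subset_of_subset
      · intro w hw
        exact h w hw
      · intro w hw y' hy'
        exact hw y' (Finset.mem_of_mem_erase hy')
    have : (D.erase y).card ∈ T :=
      ⟨D.erase y, (Finset.erase_subset _ _).trans hDsub, rfl, hPe.trans hDP⟩
    have hlt : (D.erase y).card < D.card := Finset.card_erase_lt_of_mem hy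
    have := Nat.sInf_le this
    omega
  -- every constraint in D gives an element of SS Γ X
  have hDSS : ∀ y ∈ D, y ∈ SS Γ X := by
    intro y hyD
    have hyCF : y ∈ CF := hDsub hyD
    obtain ⟨hyE, hyρ, hyX⟩ := hCFmem.mp hyCF
    have hyX0 : y - X ≠ 0 := sub_ne_zero.mpr hyX
    obtain ⟨w, hwPe, hwP⟩ := hess y hyD
    -- w violates exactly the constraint y
    have hwy : c y < ⟪y - X, w⟫ := by
      by_contra h
      push_neg at h
      apply hwP
      intro y' hy'
      by_cases hy'y : y' = y
      · rw [hy'y]; exact h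
      · exact hwPe y' (Finset.mem_erase.mpr ⟨hy'y, hy'⟩)
    have hXy : ⟪y - X, X⟫ < c y := hXstrict y hyCF
    set t₀ : ℝ := (c y - ⟪y - X, X⟫)/(⟪y - X, w⟫ - ⟪y - X, X⟫) with ht₀
    have hden : (0:ℝ) < ⟪y - X, w⟫ - ⟪y - X, X⟫ := by linarith
    have ht₀0 : 0 < t₀ := by
      rw [ht₀]; apply div_pos <;> linarith
    have ht₀1 : t₀ < 1 := by
      rw [ht₀, div_lt_one hden]; linarith
    set v : EuclideanSpace ℝ (Fin n) := X + t₀ • (w - X) with hv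
    have hcomb : ∀ y' : EuclideanSpace ℝ (Fin n),
        ⟪y' - X, v⟫ = (1-t₀) * ⟪y' - X, X⟫ + t₀ * ⟪y' - X, w⟫ := by
      intro y'
      rw [hv, show X + t₀ • (w - X) = (1-t₀) • X + t₀ • w by module,
        inner_add_right, real_inner_smul_right, real_inner_smul_right]
    have hveq : ⟪y - X, v⟫ = c y := by
      rw [hcomb y,
        show (1-t₀) * ⟪y - X, X⟫ + t₀ * ⟪y - X, w⟫
          = ⟪y - X, X⟫ + t₀ * (⟪y - X, w⟫ - ⟪y - X, X⟫) by ring,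
        ht₀, div_mul_cancel₀ _ (ne_of_gt hden)]
      ring
    have hvstrict : ∀ y' ∈ D, y' ≠ y → ⟪y' - X, v⟫ < c y' := by
      intro y' hy'D hy'y
      have h1 : ⟪y' - X, X⟫ < c y' := hXstrict y' (hDsub hy'D)
      have h2 : ⟪y' - X, w⟫ ≤ c y' := hwPe y' (Finset.mem_erase.mpr ⟨hy'y, hy'D⟩)
      rw [hcomb y']
      nlinarith
    have hvP : v ∈ PF D := by
      intro y' hy'
      by_cases hy'y : y' = y
      · rw [hy'y, hveq]
      · exact (hvstrict y' hy' hy'y).le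
    have hvPC : v ∈ PF CF := by rw [← hDP]; exact hvP
    have hvR : dist v X ≤ R := hPbdd v hvPC
    -- a uniform margin δ for the strict constraints
    obtain ⟨δ, hδ0, hδ1, hδ⟩ : ∃ δ > 0, δ ≤ 1 ∧
        ∀ y' ∈ D, y' ≠ y → ∀ z : EuclideanSpace ℝ (Fin n),
          dist z v ≤ δ → ⟪y' - X, z⟫ ≤ c y' := by
      rcases Finset.eq_empty_or_nonempty (D.erase y) with he | hne
      · refine ⟨1, one_pos, le_refl _, fun y' hy' hy'y z _ => ?_⟩
        exact absurd (Finset.mem_erase.mpr ⟨hy'y, hy'⟩) (by rw [he]; simp)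
      · set g : EuclideanSpace ℝ (Fin n) → ℝ :=
          fun y' => (c y' - ⟪y' - X, v⟫)/(‖y' - X‖ + 1) with hg
        obtain ⟨y₀, hy₀, hmin⟩ := (D.erase y).exists_min_image g hne
        have hy₀m := Finset.mem_erase.mp hy₀
        have hgy₀ : 0 < g y₀ := by
          rw [hg]
          apply div_pos
          · linarith [hvstrict y₀ hy₀m.2 hy₀m.1]
          · positivity
        refine ⟨min 1 (g y₀), lt_min one_pos hgy₀, min_le_left _ _, ?_⟩
        intro y' hy'D hy'y z hz
        have hy'e : y' ∈ D.erase y := Finset.mem_erase.mpr ⟨hy'y, hy'D⟩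
        have hgy' : min 1 (g y₀) ≤ g y' := (min_le_right _ _).trans (hmin y' hy'e)
        have hinner : ⟪y' - X, z⟫ = ⟪y' - X, v⟫ + ⟪y' - X, z - v⟫ := by
          rw [← inner_add_right]; congr 1; abel
        have hcs : ⟪y' - X, z - v⟫ ≤ ‖y' - X‖ * ‖z - v‖ := real_inner_le_norm _ _
        have hzv : ‖z - v‖ ≤ min 1 (g y₀) := by rwa [← dist_eq_norm]
        have hnn : (0:ℝ) ≤ ‖y' - X‖ := norm_nonneg _
        have key : ‖y' - X‖ * ‖z - v‖ ≤ (‖y' - X‖ + 1) * g y' := by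
          calc ‖y' - X‖ * ‖z - v‖ ≤ ‖y' - X‖ * g y' := by
                apply mul_le_mul_of_nonneg_left (hzv.trans hgy') hnn
            _ ≤ (‖y' - X‖ + 1) * g y' := by
                apply mul_le_mul_of_nonneg_right (by linarith) (by linarith [hgy₀.le.trans (hmin y' hy'e)])
        have hgval : (‖y' - X‖ + 1) * g y' = c y' - ⟪y' - X, v⟫ := by
          rw [hg]
          field_simp
        rw [hinner]
        rw [hgval] at key
        linarith [hcs.trans key]
    -- points on the bisector near v are in both Voronoi cells
    have hface : ∀ z : EuclideanSpace ℝ (Fin n), ⟪y - X, z⟫ = c y → dist z v ≤ δ →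
        z ∈ Vor E X ∩ Vor E y := by
      intro z hzeq hzv
      have hzP : z ∈ PF D := by
        intro y' hy'
        by_cases hy'y : y' = y
        · rw [hy'y, hzeq]
        · exact hδ y' hy' hy'y z hzv
      have hzPC : z ∈ PF CF := by rw [← hDP]; exact hzP
      have hzR : dist z X ≤ R + 1 := by
        calc dist z X ≤ dist z v + dist v X := dist_triangle _ _ _
          _ ≤ δ + R := by linarith
          _ ≤ R + 1 := by linarith
      have hzVX : z ∈ Vor E X := hPVor z hzPC hzR
      have hzdeq : dist z X = dist z y := by
        apply le_antisymm
        · rw [dist_le_dist_iff_inner]; exact le_of_eq hzeq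
        · rw [dist_le_dist_iff_inner]
          have : ⟪X - y, z⟫ = - ⟪y - X, z⟫ := by
            rw [show X - y = -(y-X) by abel, inner_neg_left]
          rw [this, hzeq, hc]
          simp only
          ring_nf
          linarith [le_refl (0:ℝ)]
      refine ⟨hzVX, fun e heE => ?_⟩
      rw [← hzdeq]
      exact hzVX e heE
    -- the face has dimension n-1
    have hvmem : v ∈ Vor E X ∩ Vor E y := hface v hveq (by rw [dist_self]; linarith)
    set W : Submodule ℝ (EuclideanSpace ℝ (Fin n)) :=
      LinearMap.ker ((innerSL ℝ (y - X)).toLinearMap) with hW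
    have hWrank : Module.finrank ℝ W = n - 1 := finrank_ker_inner hyX0
    have hdir : (affineSpan ℝ (Vor E X ∩ Vor E y)).direction = W := by
      apply le_antisymm
      · have hsub : Vor E X ∩ Vor E y ⊆ AffineSubspace.mk' v W := by
          intro z hz
          rw [SetLike.mem_coe, AffineSubspace.mem_mk']
          have h1 : dist z X ≤ dist z y := hz.1 y hyE
          have h2 : dist z y ≤ dist z X := hz.2 X hX
          have heq : dist z X = dist z y := le_antisymm h1 h2
          rw [dist_le_dist_iff_inner] at h1
          have h2' : ⟪y - X, z⟫ = c y := by
            rw [dist_le_dist_iff_inner] at h2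
            have hneg : ⟪X - y, z⟫ = - ⟪y - X, z⟫ := by
              rw [show X - y = -(y-X) by abel, inner_neg_left]
            rw [hneg] at h2
            show ⟪y - X, z⟫ = (‖y‖^2 - ‖X‖^2)/2
            linarith
          show ⟪y - X, z - v⟫ = 0
          rw [inner_sub_right, h2', hveq, sub_self]
        have h1 : affineSpan ℝ (Vor E X ∩ Vor E y) ≤ AffineSubspace.mk' v W :=
          affineSpan_le.mpr hsub
        have := AffineSubspace.direction_le h1
        rwa [AffineSubspace.direction_mk'] at this
      · intro ww hww
        by_cases hww0 : ww = 0
        · rw [hww0]; exact Submodule.zero_mem _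
        · have hnorm : (0:ℝ) < ‖ww‖ := norm_pos_iff.mpr hww0
          set s : ℝ := δ/(‖ww‖+1) with hs
          have hs0 : 0 < s := by positivity
          have hzmem : v + s • ww ∈ Vor E X ∩ Vor E y := by
            apply hface
            · rw [inner_add_right, real_inner_smul_right]
              have : ⟪y - X, ww⟫ = 0 := hww
              rw [this, hveq]; ring
            · rw [dist_eq_norm, show v + s • ww - v = s • ww by abel, norm_smul,
                Real.norm_eq_abs, abs_of_pos hs0, hs]
              rw [div_mul_eq_mul_div, div_le_iff₀ (by positivity)]
              nlinarith
          have hdiff : (v + s • ww) - v ∈ (affineSpan ℝ (Vor E X ∩ Vor E y)).direction :=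
            AffineSubspace.vsub_mem_direction
              (subset_affineSpan ℝ _ hzmem) (subset_affineSpan ℝ _ hvmem)
          rw [show (v + s • ww) - v = s • ww by abel] at hdiff
          have := Submodule.smul_mem _ s⁻¹ hdiff
          rwa [smul_smul, inv_mul_cancel₀ (ne_of_gt hs0), one_smul] at this
    exact ⟨hyE, hyX, by rw [← hE, hdir, hWrank]⟩
  -- contradiction: the ray X + t u stays in the polytope
  set t : ℝ := (R+1)/‖u‖ with htdef
  have hu : (0:ℝ) < ‖u‖ := norm_pos_iff.mpr hu0
  have htpos : 0 < t := by positivity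
  have hray : X + t • u ∈ PF D := by
    intro y hy
    rw [inner_add_right, real_inner_smul_right, hperp y (hDSS y hy), mul_zero, add_zero]
    exact (hXstrict y (hDsub hy)).le
  have hrayC : X + t • u ∈ PF CF := by rw [← hDP]; exact hray
  have := hPbdd _ hrayC
  rw [dist_eq_norm, show X + t • u - X = t • u by abel, norm_smul,
    Real.norm_eq_abs, abs_of_pos htpos, htdef, div_mul_cancel₀ _ (ne_of_gt hu)] at this
  linarith


theorem SS_contains_n_independent {n : ℕ} (hn : 1 ≤ n)
    (Γ : Subgroup (EuclideanSpace ℝ (Fin n) ≃ᵢ EuclideanSpace ℝ (Fin n)))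
    (hdisc : ProperlyDisc Γ) (hcc : CocompactAct Γ)
    (hne : (SingSet Γ).Nonempty)
    (X : EuclideanSpace ℝ (Fin n)) (hX : X ∈ SingSet Γ) :
    ∃ Xs : Fin n → EuclideanSpace ℝ (Fin n),
      (∀ i, Xs i ∈ SS Γ X) ∧ LinearIndependent ℝ (fun i => Xs i - X) := by
  classical
  have hspan := span_SS_top hn hdisc hcc hX
  set s : Set (EuclideanSpace ℝ (Fin n)) := (fun y => y - X) '' SS Γ X with hs
  obtain ⟨t, hts, hspan2, hli⟩ := exists_linearIndependent ℝ s
  have htop : Submodule.span ℝ t = ⊤ := by rw [hspan2, hspan]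
  have htfin : t.Finite := hli.setFinite
  have : Fintype t := htfin.fintype
  have b : Module.Basis t ℝ (EuclideanSpace ℝ (Fin n)) := Module.Basis.mk hli (by rw [Subtype.range_coe, htop])
  have hcard : Fintype.card t = n := by
    have := Module.finrank_eq_card_basis b
    rw [finrank_euclideanSpace_fin] at this
    omega
  have e : Fin n ≃ t := (Fintype.equivFinOfCardEq hcard).symm
  have hch : ∀ i : t, ∃ y ∈ SS Γ X, y - X = (i : EuclideanSpace ℝ (Fin n)) := by
    intro i
    obtain ⟨y, hy, hyx⟩ := hts i.2
    exact ⟨y, hy, hyx⟩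
  choose Y hY1 hY2 using hch
  refine ⟨fun i => Y (e i), fun i => hY1 (e i), ?_⟩
  have heq : (fun i => Y (e i) - X) = (fun i : t => (i : EuclideanSpace ℝ (Fin n))) ∘ e := by
    funext i
    exact hY2 (e i)
  rw [heq]
  exact hli.comp e e.injective
end
end

section
/- Let Ω ⊆ ℝⁿ be an open set and let f : Ω → ℝⁿ be a 1-Lipschitz map (‖f(u) − f(v)‖ ≤ ‖u − v‖ for all u, v ∈ Ω) which is volume preserving: for every Borel set A ⊆ Ω, the Lebesgue measure of the image f(A) equals the Lebesgue measure of A. Then f is locally distance preserving: for every x ∈ Ω there is ε > 0 such that ‖f(u) − f(v)‖ = ‖u − v‖ for all u, v in the open ball B(x, ε). -/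
open Metric MeasureTheory

theorem lipschitz_volume_preserving_is_local_isometry (n : ℕ)
    (Ω : Set (EuclideanSpace ℝ (Fin n))) (hΩ : IsOpen Ω)
    (f : EuclideanSpace ℝ (Fin n) → EuclideanSpace ℝ (Fin n))
    (hlip : ∀ u ∈ Ω, ∀ v ∈ Ω, ‖f u - f v‖ ≤ ‖u - v‖)
    (hvol : ∀ A ⊆ Ω, MeasurableSet A → volume (f '' A) = volume A) :
    ∀ x ∈ Ω, ∃ ε > 0,
      ∀ u ∈ ball x ε, ∀ v ∈ ball x ε, ‖f u - f v‖ = ‖u - v‖ := by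
  intro x hx
  obtain ⟨r, hr, hball⟩ := Metric.isOpen_iff.mp hΩ x hx
  refine ⟨r / 2, by positivity, ?_⟩
  intro u hu v hv
  have hsub : ball x (r / 2) ⊆ Ω := (ball_subset_ball (by linarith)).trans hball
  have huΩ : u ∈ Ω := hsub hu
  have hvΩ : v ∈ Ω := hsub hv
  by_contra hne
  have hlt : ‖f u - f v‖ < ‖u - v‖ := lt_of_le_of_ne (hlip u huΩ v hvΩ) hne
  set c := ‖f u - f v‖ with hc
  set d := ‖u - v‖ with hd
  have hc0 : 0 ≤ c := norm_nonneg _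
  have hd0 : 0 < d := lt_of_le_of_lt hc0 hlt
  set δ := (c + d) / 4 with hδ
  have hδ0 : 0 < δ := by rw [hδ]; linarith
  have hux : dist u x < r / 2 := mem_ball.mp hu
  have hvx : dist v x < r / 2 := mem_ball.mp hv
  have hdr : d < r := by
    have h1 : dist u v ≤ dist u x + dist x v := dist_triangle u x v
    rw [dist_comm x v] at h1
    rw [hd, ← dist_eq_norm]
    linarith
  have hδr : δ < r / 2 := by rw [hδ]; linarith
  set A := ball u δ ∪ ball v δ with hA
  have hAΩ : A ⊆ Ω := by
    intro w hw
    apply hball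
    rw [mem_ball]
    rcases hw with hw | hw
    · have := mem_ball.mp hw
      have h2 := dist_triangle w u x
      linarith
    · have := mem_ball.mp hw
      have h2 := dist_triangle w v x
      linarith
  have hdisj : Disjoint (ball u δ) (ball v δ) := by
    rw [Set.disjoint_left]
    intro w hwu hwv
    have h1 := mem_ball.mp hwu
    have h2 := mem_ball.mp hwv
    have h3 : dist u v ≤ dist u w + dist w v := dist_triangle u w v
    rw [dist_comm u w] at h3
    have h4 : dist u v = d := by rw [hd, dist_eq_norm]
    rw [hδ] at h1 h2
    linarith
  set V := volume (ball (0 : EuclideanSpace ℝ (Fin n)) δ) with hV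
  have hVball : ∀ y : EuclideanSpace ℝ (Fin n), volume (ball y δ) = V :=
    fun y => Measure.addHaar_ball_center volume y δ
  have hVfin : V ≠ ⊤ := measure_ball_lt_top.ne
  have hvolA : volume A = V + V := by
    rw [hA, measure_union hdisj measurableSet_ball, hVball, hVball]
  have himg : f '' A ⊆ ball (f u) δ ∪ ball (f v) δ := by
    rintro _ ⟨w, hw, rfl⟩
    have hwΩ : w ∈ Ω := hAΩ hw
    rcases hw with hw | hw
    · left
      rw [mem_ball, dist_eq_norm]
      have h1 : dist w u < δ := mem_ball.mp hw
      rw [dist_eq_norm] at h1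
      exact lt_of_le_of_lt (hlip w hwΩ u huΩ) h1
    · right
      rw [mem_ball, dist_eq_norm]
      have h1 : dist w v < δ := mem_ball.mp hw
      rw [dist_eq_norm] at h1
      exact lt_of_le_of_lt (hlip w hwΩ v hvΩ) h1
  have key : V + V ≤ volume (ball (f u) δ ∪ ball (f v) δ) := by
    rw [← hvolA, ← hvol A hAΩ (measurableSet_ball.union measurableSet_ball)]
    exact measure_mono himg
  have hm : midpoint ℝ (f u) (f v) ∈ ball (f u) δ ∩ ball (f v) δ := by
    constructor
    · rw [mem_ball, dist_midpoint_left]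
      have : dist (f u) (f v) = c := by rw [hc, dist_eq_norm]
      rw [this]
      have h2 : ‖(2:ℝ)‖⁻¹ = 1 / 2 := by norm_num
      rw [h2, hδ]
      linarith
    · rw [mem_ball, dist_midpoint_right]
      have : dist (f u) (f v) = c := by rw [hc, dist_eq_norm]
      rw [this]
      have h2 : ‖(2:ℝ)‖⁻¹ = 1 / 2 := by norm_num
      rw [h2, hδ]
      linarith
  have hIpos : 0 < volume (ball (f u) δ ∩ ball (f v) δ) :=
    (isOpen_ball.inter isOpen_ball).measure_pos volume ⟨_, hm⟩
  have hU : volume (ball (f u) δ ∪ ball (f v) δ) + volume (ball (f u) δ ∩ ball (f v) δ)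
      = V + V := by
    rw [measure_union_add_inter _ measurableSet_ball, hVball, hVball]
  have hUfin : volume (ball (f u) δ ∪ ball (f v) δ) ≠ ⊤ := by
    refine ne_top_of_le_ne_top (ENNReal.add_ne_top.mpr ⟨hVfin, hVfin⟩) ?_
    rw [← hU]; exact le_self_add
  have hzero : volume (ball (f u) δ ∩ ball (f v) δ) ≤ 0 := by
    apply ENNReal.le_of_add_le_add_left hUfin
    rw [add_zero, hU]
    exact key
  exact absurd hzero (not_le.mpr hIpos)
end
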